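/- arXiv:math/0409549 — 5 statements merged into one kernel-verified Lean document; each statement's English description precedes it below -/
import Mathlib

section
/- Let R be a commutative valuation ring that is self fp-injective. Then for every element a in the maximal ideal P of R, the annihilator (0 : a) is nonzero; consequently P is the only prime ideal when R is in addition archimedean. -/
open IsLocalRing

universe u

/-- A chain (valuation) ring: ideals are totally ordered by inclusion. -/
def IsChainRing (R : Type u) [CommRing R] : Prop := ∀ I J : Ideal R, I ≤ J ∨ J ≤ I

/-- Archimedean: the maximal ideal is the only nonzero prime ideal. -/
def IsArchimedeanLocal (R : Type u) [CommRing R] [IsLocalRing R] : Prop :=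
  ∀ Q : Ideal R, Q.IsPrime → Q ≠ ⊥ → Q = maximalIdeal R

/-- The annihilator ideal `(0 : x)` of a module element. -/
def annOf (R : Type u) {M : Type u} [CommRing R] [AddCommGroup M] [Module R M] (x : M) :
    Ideal R := LinearMap.ker (LinearMap.toSpanSingleton R M x)

/-- fp-injective (absolutely pure): every homomorphism from a finitely generated
submodule of a finite free module extends; equivalently `Ext¹(F, M) = 0` for every
finitely presented `F`. -/
def IsFpInjective (R M : Type u) [CommRing R] [AddCommGroup M] [Module R M] : Prop :=
  ∀ (n : ℕ) (K : Submodule R (Fin n → R)), K.FG →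
    ∀ g : K →ₗ[R] M, ∃ h : (Fin n → R) →ₗ[R] M, ∀ x : K, h x = g x

/-- A coherent ring: every finitely generated ideal is finitely presented. -/
def IsCoherentRing (R : Type u) [CommRing R] : Prop :=
  ∀ I : Ideal R, I.FG → Module.FinitePresentation R ↥I

/-- An IF-ring: coherent and self fp-injective. -/
def IsIFRing (R : Type u) [CommRing R] : Prop := IsCoherentRing R ∧ IsFpInjective R R

/-- Purity of a submodule: `I·M ⊓ X = I·X` for every finitely generated ideal `I`. -/
def IsPureSubmodule {R M : Type u} [CommRing R] [AddCommGroup M] [Module R M]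
    (X : Submodule R M) : Prop :=
  ∀ I : Ideal R, I.FG → (I • (⊤ : Submodule R M)) ⊓ X = I • X

/-- A submodule is uniserial if its submodules are totally ordered by inclusion. -/
def IsUniserialSub {R M : Type u} [CommRing R] [AddCommGroup M] [Module R M]
    (U : Submodule R M) : Prop :=
  ∀ V W : Submodule R M, V ≤ U → W ≤ U → V ≤ W ∨ W ≤ V

/-- A uniserial module: submodules are totally ordered by inclusion. -/
def IsUniserialMod (R M : Type u) [CommRing R] [AddCommGroup M] [Module R M] : Prop :=
  ∀ V W : Submodule R M, V ≤ W ∨ W ≤ V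

/-- A faithful submodule: only `0` annihilates all its elements. -/
def IsFaithfulSub {R M : Type u} [CommRing R] [AddCommGroup M] [Module R M]
    (U : Submodule R M) : Prop := ∀ r : R, (∀ x ∈ U, r • x = 0) → r = 0

/-- A faithful module: its annihilator is zero. -/
def IsFaithfulMod (R M : Type u) [CommRing R] [AddCommGroup M] [Module R M] : Prop :=
  ∀ r : R, (∀ x : M, r • x = 0) → r = 0

/-- `μ(M)`: the minimal number of generators of a module. -/
noncomputable def mu (R M : Type u) [CommRing R] [AddCommGroup M] [Module R M] : ℕ :=
  sInf {n : ℕ | ∃ s : Finset M, s.card = n ∧ Submodule.span R (s : Set M) = ⊤}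

/-- A maximal ring: every family of cosets of ideals with the finite intersection
property has nonempty total intersection. -/
def IsMaximalRing (R : Type u) [CommRing R] : Prop :=
  ∀ (ι : Type u) (a : ι → R) (A : ι → Ideal R),
    (∀ s : Finset ι, ∃ x : R, ∀ i ∈ s, x - a i ∈ A i) → ∃ x : R, ∀ i, x - a i ∈ A i

/-- Almost maximal: `R/A` is maximal for every nonzero ideal `A`. -/
def IsAlmostMaximalRing (R : Type u) [CommRing R] : Prop :=
  ∀ A : Ideal R, A ≠ ⊥ → IsMaximalRing (R ⧸ A)

/-- A uniform module: any two nonzero submodules intersect nontrivially. -/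
def IsUniformMod (R M : Type u) [CommRing R] [AddCommGroup M] [Module R M] : Prop :=
  ∀ N₁ N₂ : Submodule R M, N₁ ≠ ⊥ → N₂ ≠ ⊥ → N₁ ⊓ N₂ ≠ ⊥

/-- Bounded module type with bound `n`: every finitely generated module is a direct
sum of submodules each generated by at most `n` elements. -/
def HasBoundedModuleType (R : Type u) [CommRing R] (n : ℕ) : Prop :=
  ∀ (M : Type u) [AddCommGroup M] [Module R M], Module.Finite R M →
    ∃ (ι : Type u) (N : ι → Submodule R M),
      iSupIndep N ∧ (⨆ i, N i) = ⊤ ∧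
      ∀ i, ∃ s : Finset M, s.card ≤ n ∧ Submodule.span R (s : Set M) = N i

/-- In a self fp-injective valuation ring, every element of the maximal
ideal has nonzero annihilator; consequently, if `R` is archimedean then the maximal
ideal is the only prime ideal. -/
theorem stmt0 (R : Type u) [CommRing R] [IsLocalRing R]
    (hchain : IsChainRing R) (hself : IsFpInjective R R) :
    (∀ a ∈ maximalIdeal R, ∃ r : R, r ≠ 0 ∧ r * a = 0) ∧
    (IsArchimedeanLocal R → ∀ Q : Ideal R, Q.IsPrime → Q = maximalIdeal R) := by
  have key : ∀ a ∈ maximalIdeal R, ∃ r : R, r ≠ 0 ∧ r * a = 0 := by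
    intro a ha
    by_contra hcon
    push_neg at hcon
    have hann : ∀ r : R, r * a = 0 → r = 0 := by
      intro r hr
      by_contra h0
      exact (hcon r h0) hr
    set f : Fin 1 → R := fun _ => a with hf
    set T : R →ₗ[R] (Fin 1 → R) := LinearMap.toSpanSingleton R (Fin 1 → R) f with hT
    have hinj : Function.Injective T := by
      intro x y hxy
      have h1 : x * a = y * a := by
        have := congrFun (show T x = T y from hxy) 0
        simpa [hT, hf, LinearMap.toSpanSingleton_apply] using this
      have h2 : (x - y) * a = 0 := by rw [sub_mul, h1, sub_self]
      have := hann _ h2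
      exact sub_eq_zero.mp this
    set K : Submodule R (Fin 1 → R) := LinearMap.range T with hK
    have hKfg : K.FG := by
      rw [hK, ← LinearMap.span_singleton_eq_range]
      exact Submodule.fg_span_singleton f
    set e : R ≃ₗ[R] K := LinearEquiv.ofInjective T hinj with he
    obtain ⟨h, hh⟩ := hself 1 K hKfg (e.symm : K →ₗ[R] R)
    have hT1 : T 1 = f := by simp [hT]
    have hfK : f ∈ K := ⟨1, hT1⟩
    have h1 : h f = 1 := by
      have hx := hh (e 1)
      simp only [LinearEquiv.coe_coe, LinearEquiv.symm_apply_apply] at hx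
      have hcoe : ((e 1 : K) : Fin 1 → R) = f := by
        rw [he, LinearEquiv.ofInjective_apply, hT1]
      rw [hcoe] at hx
      exact hx
    have hfa : f = a • (fun _ => (1 : R)) := by
      funext i; simp [hf]
    have hunit : a * h (fun _ => (1 : R)) = 1 := by
      calc a * h (fun _ => (1 : R)) = h (a • fun _ => (1 : R)) := by
            rw [map_smul, smul_eq_mul]
        _ = h f := by rw [← hfa]
        _ = 1 := h1
    exact (IsLocalRing.mem_maximalIdeal a).mp ha (isUnit_iff_exists_inv.mpr ⟨_, hunit⟩)
  refine ⟨key, fun harch Q hQ => ?_⟩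
  by_cases hQb : Q = ⊥
  · subst hQb
    have hP : maximalIdeal R = ⊥ := by
      by_contra hP
      obtain ⟨x, hxP, hx0⟩ := Submodule.exists_mem_ne_zero_of_ne_bot hP
      obtain ⟨r, hr0, hra⟩ := key x hxP
      rcases hQ.mem_or_mem (show r * x ∈ (⊥ : Ideal R) from hra) with h | h
      · exact hr0 h
      · exact hx0 h
    exact hP.symm
  · exact harch Q hQ hQb
end

section
/- Let R be a non-noetherian archimedean valuation ring that is an IF-ring. Then the maximal ideal P of R is faithful, i.e., its annihilator (0 : P) is zero. -/
open IsLocalRing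

universe u

section Aux

variable {R : Type u} [CommRing R]

lemma aux_unit [IsLocalRing R] {a : R} (ha : a ∈ maximalIdeal R) : IsUnit (1 - a) := by
  by_contra h
  have h1 : (1 : R) - a ∈ maximalIdeal R := h
  have : (1 : R) ∈ maximalIdeal R := by
    have h2 := (maximalIdeal R).add_mem h1 ha
    simpa using h2
  exact this isUnit_one

lemma aux_cancel [IsLocalRing R] {x a : R} (ha : a ∈ maximalIdeal R)
    (h : x * (1 - a) = 0) : x = 0 := by
  obtain ⟨u, hu⟩ := aux_unit ha
  calc x = x * (1 - a) * ↑u⁻¹ := by rw [mul_assoc, ← hu, Units.mul_inv, mul_one]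
  _ = 0 := by rw [h, zero_mul]

lemma chain_span_finset (hchain : IsChainRing R) (s : Finset R) :
    ∃ q : R, Ideal.span (s : Set R) = Ideal.span {q} := by
  classical
  induction s using Finset.induction_on with
  | empty => exact ⟨0, by simp [Ideal.span_singleton_eq_bot.mpr rfl]⟩
  | @insert a s ha ih =>
    obtain ⟨q, hq⟩ := ih
    rw [Finset.coe_insert, Ideal.span_insert, hq]
    rcases hchain (Ideal.span {a}) (Ideal.span {q}) with h | h
    · exact ⟨q, sup_eq_right.mpr h⟩
    · exact ⟨a, sup_eq_left.mpr h⟩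

end Aux

theorem stmt2 (R : Type u) [CommRing R] [IsLocalRing R]
    (hchain : IsChainRing R) (harch : IsArchimedeanLocal R)
    (hnoeth : ¬ IsNoetherianRing R) (hIF : IsIFRing R) :
    ∀ r : R, (∀ a ∈ maximalIdeal R, r * a = 0) → r = 0 := by
  intro r hr
  by_contra hr0
  classical
  -- the map x ↦ x • r, corestricted to the ideal (r)
  have hmem : ∀ x : R, (LinearMap.toSpanSingleton R R r) x ∈ (Ideal.span {r} : Ideal R) := by
    intro x
    exact Submodule.mem_span_singleton.mpr ⟨x, rfl⟩
  set f : R →ₗ[R] ↥(Ideal.span {r} : Ideal R) :=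
    LinearMap.codRestrict (Ideal.span {r} : Ideal R) (LinearMap.toSpanSingleton R R r) hmem
    with hf
  have hsurj : Function.Surjective f := by
    rintro ⟨y, hy⟩
    obtain ⟨c, rfl⟩ := Submodule.mem_span_singleton.mp hy
    exact ⟨c, rfl⟩
  have hker : LinearMap.ker f = maximalIdeal R := by
    rw [hf, LinearMap.ker_codRestrict]
    apply le_antisymm
    · intro x hx
      rw [LinearMap.mem_ker, LinearMap.toSpanSingleton_apply, smul_eq_mul] at hx
      by_contra hxm
      have hux : IsUnit x := by
        rw [mem_maximalIdeal, mem_nonunits_iff, not_not] at hxm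
        exact hxm
      obtain ⟨u, hu⟩ := hux
      apply hr0
      calc r = ↑u⁻¹ * (x * r) := by rw [← hu, ← mul_assoc, Units.inv_mul, one_mul]
      _ = 0 := by rw [hx, mul_zero]
    · intro a ha
      rw [LinearMap.mem_ker, LinearMap.toSpanSingleton_apply, smul_eq_mul, mul_comm]
      exact hr a ha
  -- coherence: the maximal ideal, being ker f, is finitely generated
  haveI fp : Module.FinitePresentation R ↥(Ideal.span {r} : Ideal R) :=
    hIF.1 _ ⟨{r}, by simp⟩
  have hPfg : (maximalIdeal R).FG := by
    have := Module.FinitePresentation.fg_ker f hsurj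
    rwa [hker] at this
  -- fg ideal in a chain ring is principal
  obtain ⟨s, hs⟩ := hPfg
  obtain ⟨p, hps⟩ := chain_span_finset hchain s
  have hp : maximalIdeal R = Ideal.span {p} := by rw [← hs, hps]
  -- intersection of the powers of the maximal ideal is zero
  have hQ : (⨅ n : ℕ, Ideal.span {p ^ n} : Ideal R) = ⊥ := by
    by_contra hQ0
    have pnil : ∀ n : ℕ, p ^ n ≠ 0 := by
      intro n hn
      apply hQ0
      apply le_antisymm _ bot_le
      refine le_trans (iInf_le _ n) ?_
      rw [hn]
      rw [Ideal.span_singleton_eq_bot.mpr rfl]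
    have hprime : (⨅ n : ℕ, Ideal.span {p ^ n} : Ideal R).IsPrime := by
      constructor
      · intro htop
        have h1 : (1 : R) ∈ (⨅ n : ℕ, Ideal.span {p ^ n} : Ideal R) := htop ▸ trivial
        have h1' : (1 : R) ∈ Ideal.span ({p ^ 1} : Set R) := Submodule.mem_iInf _ |>.mp h1 1
        rw [pow_one, ← hp, mem_maximalIdeal, mem_nonunits_iff] at h1'
        exact h1' isUnit_one
      · intro a b hab
        by_contra hcon
        push_neg at hcon
        obtain ⟨ha, hb⟩ := hcon
        rw [Submodule.mem_iInf] at ha hb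
        push_neg at ha hb
        obtain ⟨n, han⟩ := ha
        obtain ⟨m, hbm⟩ := hb
        have h1 : Ideal.span {p ^ n} ≤ Ideal.span {a} := by
          rcases hchain (Ideal.span {p ^ n}) (Ideal.span {a}) with h | h
          · exact h
          · exact absurd (h (Ideal.mem_span_singleton_self a)) han
        have h2 : Ideal.span {p ^ m} ≤ Ideal.span {b} := by
          rcases hchain (Ideal.span {p ^ m}) (Ideal.span {b}) with h | h
          · exact h
          · exact absurd (h (Ideal.mem_span_singleton_self b)) hbm
        obtain ⟨c, hc⟩ := Ideal.mem_span_singleton'.mp (h1 (Ideal.mem_span_singleton_self _))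
        obtain ⟨d, hd⟩ := Ideal.mem_span_singleton'.mp (h2 (Ideal.mem_span_singleton_self _))
        have hab' : a * b ∈ Ideal.span ({p ^ (n + m + 1)} : Set R) :=
          Submodule.mem_iInf _ |>.mp hab (n + m + 1)
        obtain ⟨e, he⟩ := Ideal.mem_span_singleton'.mp hab'
        have key : p ^ (n + m) * (1 - c * d * e * p) = 0 := by
          have h3 : p ^ (n + m) = c * d * (a * b) := by
            rw [pow_add, ← hc, ← hd]; ring
          have h4 : p ^ (n + m + 1) = p ^ (n + m) * p := pow_succ _ _
          calc p ^ (n + m) * (1 - c * d * e * p)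
              = c * d * (a * b) - c * d * e * (p ^ (n + m) * p) := by rw [h3]; ring
          _ = c * d * (e * p ^ (n + m + 1)) - c * d * e * p ^ (n + m + 1) := by
                rw [← he, ← h4]
          _ = 0 := by ring
        have hmemp : c * d * e * p ∈ maximalIdeal R := by
          rw [hp]
          exact Ideal.mul_mem_left _ _ (Ideal.mem_span_singleton_self p)
        exact pnil (n + m) (aux_cancel hmemp key)
    have hQP := harch _ hprime hQ0
    have hpQ : p ∈ (⨅ n : ℕ, Ideal.span {p ^ n} : Ideal R) := by
      rw [hQP, hp]; exact Ideal.mem_span_singleton_self p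
    have hp2 : p ∈ Ideal.span ({p ^ 2} : Set R) := Submodule.mem_iInf _ |>.mp hpQ 2
    obtain ⟨c, hc⟩ := Ideal.mem_span_singleton'.mp hp2
    have key : p * (1 - c * p) = 0 := by
      calc p * (1 - c * p) = p - c * p ^ 2 := by ring
      _ = 0 := by rw [hc]; ring
    have hmemp : c * p ∈ maximalIdeal R := by
      rw [hp]
      exact Ideal.mul_mem_left _ _ (Ideal.mem_span_singleton_self p)
    exact pnil 1 (by simpa using aux_cancel hmemp key)
  -- hence R is noetherian, contradiction
  apply hnoeth
  rw [isNoetherianRing_iff_ideal_fg]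
  intro I
  by_cases hex : ∃ n : ℕ, Ideal.span {p ^ n} ≤ I
  · have hn : Ideal.span {p ^ Nat.find hex} ≤ I := Nat.find_spec hex
    by_cases hIle : I ≤ Ideal.span {p ^ Nat.find hex}
    · have : I = Ideal.span {p ^ Nat.find hex} := le_antisymm hIle hn
      exact this ▸ ⟨{p ^ Nat.find hex}, by simp⟩
    · exfalso
      rw [SetLike.le_def] at hIle
      push_neg at hIle
      obtain ⟨x, hxI, hxn⟩ := hIle
      rcases Nat.eq_zero_or_eq_succ_pred (Nat.find hex) with h0 | hsucc
      · rw [h0, pow_zero, Ideal.span_singleton_one] at hxn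
        exact hxn trivial
      · set k := (Nat.find hex).pred with hk
        have hkn : k < Nat.find hex := by omega
        have hmin : ¬ Ideal.span {p ^ k} ≤ I := Nat.find_min hex hkn
        have hIk : I ≤ Ideal.span {p ^ k} := by
          rcases hchain I (Ideal.span {p ^ k}) with h | h
          · exact h
          · exact absurd h hmin
        obtain ⟨c, hc⟩ := Ideal.mem_span_singleton'.mp (hIk hxI)
        have hcu : IsUnit c := by
          by_contra hcn
          apply hxn
          have hcm : c ∈ maximalIdeal R := by
            rw [mem_maximalIdeal, mem_nonunits_iff]; exact hcn
          rw [hp] at hcm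
          obtain ⟨d, hd⟩ := Ideal.mem_span_singleton'.mp hcm
          refine Ideal.mem_span_singleton'.mpr ⟨d, ?_⟩
          rw [hsucc, pow_succ, ← hc, ← hd]
          ring
        obtain ⟨u, hu⟩ := hcu
        apply hmin
        rw [Ideal.span_le, Set.singleton_subset_iff]
        have : p ^ k = ↑u⁻¹ * x := by
          rw [← hc, ← hu, ← mul_assoc, Units.inv_mul, one_mul]
        rw [this]
        exact Ideal.mul_mem_left _ _ hxI
  · push_neg at hex
    have : I ≤ ⊥ := by
      rw [← hQ, le_iInf_iff]
      intro n
      rcases hchain I (Ideal.span {p ^ n}) with h | h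
      · exact h
      · exact absurd h (hex n)
    rw [le_bot_iff] at this
    exact this ▸ Submodule.fg_bot
end

section
/- Let R be a coherent archimedean valuation ring, Y an injective R-module, and X a pure submodule of Y. Then the quotient Y/X is an injective R-module. -/
open IsLocalRing

universe u

section AuxChain

variable {R : Type u} [CommRing R]

lemma chain_dvd (hchain : IsChainRing R) (a b : R) : a ∣ b ∨ b ∣ a := by
  rcases hchain (Ideal.span {a}) (Ideal.span {b}) with h | h
  · exact Or.inr (Ideal.mem_span_singleton.mp (h (Ideal.mem_span_singleton_self a)))
  · exact Or.inl (Ideal.mem_span_singleton.mp (h (Ideal.mem_span_singleton_self b)))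

lemma span_finset_principal (hchain : IsChainRing R) (s : Finset R) :
    ∃ a : R, Ideal.span (s : Set R) = Ideal.span {a} := by
  classical
  induction s using Finset.induction_on with
  | empty => exact ⟨0, by simp [Ideal.span_singleton_eq_bot.mpr rfl]⟩
  | @insert b s hb ih =>
    obtain ⟨a, ha⟩ := ih
    rw [Finset.coe_insert, Ideal.span_insert, ha]
    rcases chain_dvd hchain a b with hd | hd
    · exact ⟨a, sup_eq_right.mpr (Ideal.span_singleton_le_span_singleton.mpr hd)⟩
    · exact ⟨b, sup_eq_left.mpr (Ideal.span_singleton_le_span_singleton.mpr hd)⟩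

lemma fg_principal (hchain : IsChainRing R) {I : Ideal R} (hI : I.FG) :
    ∃ a : R, I = Ideal.span {a} := by
  obtain ⟨s, hs⟩ := hI
  obtain ⟨a, ha⟩ := span_finset_principal hchain s
  exact ⟨a, by rw [← hs, ha]⟩



variable [IsLocalRing R]

lemma unit_of_not_mem_max {x : R} (hx : x ∉ maximalIdeal R) : IsUnit x := by
  by_contra h
  exact hx ((IsLocalRing.mem_maximalIdeal x).mpr (mem_nonunits_iff.mpr h))

lemma unit_one_sub {x : R} (hx : x ∈ maximalIdeal R) : IsUnit (1 - x) := by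
  apply unit_of_not_mem_max
  intro h
  have : (1 : R) ∈ maximalIdeal R := by
    have := add_mem h hx
    simpa using this
  exact (IsLocalRing.maximalIdeal.isMaximal R).ne_top (Ideal.eq_top_of_isUnit_mem _ this isUnit_one)

lemma exists_pow_mem (hchain : IsChainRing R) (harch : IsArchimedeanLocal R)
    {a : R} (ha : a ≠ 0) {x : R} (hx : x ∈ maximalIdeal R) :
    ∃ n : ℕ, x ^ (n + 1) ∈ Ideal.span {a} := by
  by_cases hu : IsUnit a
  · exact ⟨0, by simp [Ideal.span_singleton_eq_top.mpr hu]⟩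
  have hprime : (Ideal.span {a}).radical.IsPrime := by
    constructor
    · rw [Ne, Ideal.radical_eq_top, Ideal.span_singleton_eq_top]
      exact hu
    · intro x y hxy
      rcases chain_dvd hchain x y with ⟨c, rfl⟩ | ⟨c, rfl⟩
      · -- y = x * c
        right
        obtain ⟨n, hn⟩ := hxy
        refine ⟨2 * n, ?_⟩
        have : (x * c) ^ (2 * n) = (x * (x * c)) ^ n * c ^ n * x ^ 0 := by ring
        rw [this]
        exact Ideal.mul_mem_right _ _ (by simpa using Ideal.mul_mem_right _ _ hn)
      · left
        obtain ⟨n, hn⟩ := hxy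
        refine ⟨2 * n, ?_⟩
        have : (y * c) ^ (2 * n) = ((y * c) * y) ^ n * c ^ n * y ^ 0 := by ring
        rw [this]
        exact Ideal.mul_mem_right _ _ (Ideal.mul_mem_right _ _ hn)
  have hne : (Ideal.span {a}).radical ≠ ⊥ := by
    intro h
    have : a ∈ (Ideal.span {a}).radical := Ideal.le_radical (Ideal.mem_span_singleton_self a)
    rw [h] at this
    exact ha this
  have heq := harch _ hprime hne
  have hxr : x ∈ (Ideal.span {a}).radical := heq ▸ hx
  obtain ⟨n, hn⟩ := Ideal.mem_radical_iff.mp hxr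
  cases n with
  | zero =>
    simp at hn
    exact absurd (Ideal.span_singleton_eq_top.mp (Ideal.eq_top_iff_one _ |>.mpr hn)) hu
  | succ k => exact ⟨k, hn⟩

/-- the ideal of elements x with x^(n+1) ∈ (a) -/
def powIdeal (hchain : IsChainRing R) (a : R) (n : ℕ) : Ideal R where
  carrier := {x | x ^ (n + 1) ∈ Ideal.span {a}}
  add_mem' := by
    intro x y hx hy
    rcases chain_dvd hchain x y with ⟨c, rfl⟩ | ⟨c, rfl⟩
    · have h1 : x + x * c = (1 + c) * x := by ring
      simp only [Set.mem_setOf_eq] at hx ⊢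
      rw [h1, mul_pow]
      exact Ideal.mul_mem_left _ _ hx
    · have h1 : y * c + y = (1 + c) * y := by ring
      simp only [Set.mem_setOf_eq] at hy ⊢
      rw [h1, mul_pow]
      exact Ideal.mul_mem_left _ _ hy
  zero_mem' := by simp
  smul_mem' := by
    intro c x hx
    simp only [Set.mem_setOf_eq, smul_eq_mul, mul_pow] at hx ⊢
    exact Ideal.mul_mem_left _ _ hx



lemma mem_powIdeal_iff (hchain : IsChainRing R) (a : R) (n : ℕ) (x : R) :
    x ∈ powIdeal hchain a n ↔ x ^ (n + 1) ∈ Ideal.span {a} := Iff.rfl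

/-- cofinal sequence -/
def HasCofinalSeq (I : Ideal R) : Prop :=
  ∃ u : ℕ → R, (∀ n, u n ∈ I) ∧ ∀ x ∈ I, ∃ n, x ∈ Ideal.span {u n}

lemma cover_of_not_cofinal (hchain : IsChainRing R) {I : Ideal R} (h : ¬ HasCofinalSeq I)
    (J : ℕ → Ideal R) (hJ : ∀ x ∈ I, ∃ n, x ∈ J n) : ∃ n, I ≤ J n := by
  by_contra hc
  push_neg at hc
  choose xf hx1 hx2 using fun n => SetLike.not_le_iff_exists.mp (hc n)
  have hnc : ¬ ∀ x ∈ I, ∃ n, x ∈ Ideal.span {xf n} := fun hcof => h ⟨xf, hx1, hcof⟩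
  push_neg at hnc
  obtain ⟨y, hyI, hy⟩ := hnc
  obtain ⟨k, hk⟩ := hJ y hyI
  apply hx2 k
  rcases chain_dvd hchain y (xf k) with ⟨c, hcc⟩ | hd
  · rw [hcc]; exact Ideal.mul_mem_right _ _ hk
  · exact absurd (Ideal.mem_span_singleton.mpr hd) (hy k)

lemma principal_cofinal {I : Ideal R} {a : R} (haI : a ∈ I) (hle : I ≤ Ideal.span {a}) :
    HasCofinalSeq I :=
  ⟨fun _ => a, fun _ => haI, fun z hz => ⟨0, hle hz⟩⟩


lemma step_lemma (hchain : IsChainRing R) {I : Ideal R} (h : ¬ HasCofinalSeq I)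
    {x : R} (hx : x ∈ I) :
    ∃ y, (y ∈ I ∧ y ≠ 0) ∧ ∃ s, s ∈ maximalIdeal R ∧ x = s * y := by
  have hex : ∃ y ∈ I, y ∉ Ideal.span {x} := by
    by_contra hc; push_neg at hc
    exact h (principal_cofinal hx hc)
  obtain ⟨y, hy, hyx⟩ := hex
  have hdvd : y ∣ x := by
    rcases chain_dvd hchain x y with hd | hd
    · exact absurd (Ideal.mem_span_singleton.mpr hd) hyx
    · exact hd
  obtain ⟨s, hs⟩ := hdvd
  refine ⟨y, ⟨hy, ?_⟩, s, ?_, by rw [hs]; ring⟩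
  · rintro rfl
    exact hyx (Ideal.zero_mem _)
  · by_contra hsm
    have hu := unit_of_not_mem_max hsm
    apply hyx
    rw [Ideal.mem_span_singleton]
    obtain ⟨u, rfl⟩ := hu
    exact ⟨↑u⁻¹, by rw [hs, Units.mul_inv_cancel_right]⟩

lemma maximalIdeal_cofinal (hchain : IsChainRing R) (harch : IsArchimedeanLocal R) :
    HasCofinalSeq (maximalIdeal R) := by
  classical
  by_contra h
  have hm0 : maximalIdeal R ≠ ⊥ := by
    intro hb
    apply h
    refine ⟨fun _ => 0, fun _ => Ideal.zero_mem _, fun z hz => ⟨0, ?_⟩⟩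
    rw [hb] at hz
    simp only [Ideal.mem_bot] at hz
    simp [hz]
  obtain ⟨a, haM, ha0⟩ := (Submodule.ne_bot_iff _).mp hm0
  obtain ⟨n, hn⟩ := cover_of_not_cofinal hchain h (powIdeal hchain a)
    (fun x hx => by
      obtain ⟨k, hk⟩ := exists_pow_mem hchain harch ha0 hx
      exact ⟨k, (mem_powIdeal_iff hchain a k x).mpr hk⟩)
  -- hn : maximalIdeal R ≤ powIdeal hchain a n
  have hpow : ∀ x ∈ maximalIdeal R, x ^ (n+1) ∈ Ideal.span {a} :=
    fun x hx => (mem_powIdeal_iff hchain a n x).mp (hn hx)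
  -- build descending chain
  have hstep : ∀ x : {z : R // z ∈ maximalIdeal R},
      ∃ (y : {z : R // z ∈ maximalIdeal R}) (s : R), s ∈ maximalIdeal R ∧ x.1 = s * y.1 := by
    rintro ⟨x, hx⟩
    obtain ⟨y, ⟨hy, _⟩, s, hsm, hxs⟩ := step_lemma hchain h hx
    exact ⟨⟨y, hy⟩, s, hsm, hxs⟩
  choose f S hSm hEq using hstep
  set x : ℕ → {z : R // z ∈ maximalIdeal R} :=
    fun k => Nat.rec (⟨a, haM⟩ : {z : R // z ∈ maximalIdeal R}) (fun _ p => f p) k with hxdef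
  have hxsucc : ∀ k, x (k+1) = f (x k) := fun k => rfl
  have hprod : ∀ K : ℕ, (x 0).1 = (∏ i ∈ Finset.range K, S (x i)) * (x K).1 := by
    intro K
    induction K with
    | zero => simp
    | succ K ih =>
      rw [Finset.prod_range_succ, ih, hxsucc K, hEq (x K)]
      ring
  -- minimal multiplier among the first K
  have hmin : ∀ K : ℕ, ∃ j, ∀ i ∈ Finset.range K, S (x j) ∣ S (x i) := by
    intro K
    induction K with
    | zero => exact ⟨0, by simp⟩
    | succ K ih =>
      obtain ⟨j, hj⟩ := ih
      rcases chain_dvd hchain (S (x j)) (S (x K)) with hd | hd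
      · refine ⟨j, fun i hi => ?_⟩
        rcases Finset.mem_range_succ_iff.mp hi |>.lt_or_eq with hlt | rfl
        · exact hj i (Finset.mem_range.mpr hlt)
        · exact hd
      · refine ⟨K, fun i hi => ?_⟩
        rcases Finset.mem_range_succ_iff.mp hi |>.lt_or_eq with hlt | rfl
        · exact dvd_trans hd (hj i (Finset.mem_range.mpr hlt))
        · exact dvd_rfl
  obtain ⟨j, hj⟩ := hmin (n+2)
  set σ := S (x j) with hσ
  have hc : ∀ i ∈ Finset.range (n+2), ∃ c, S (x i) = σ * c := fun i hi => hj i hi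
  choose cf hcf using hc
  have hprod2 : (∏ i ∈ Finset.range (n+2), S (x i))
      = σ ^ (n+2) * ∏ i ∈ Finset.range (n+2) |>.attach, cf i.1 i.2 := by
    rw [← Finset.prod_attach (Finset.range (n+2)) (fun i => S (x i))]
    rw [Finset.prod_congr rfl (fun i _ => hcf i.1 i.2)]
    rw [Finset.prod_mul_distrib, Finset.prod_const]
    simp
  have ha : a = σ ^ (n+2) * ((∏ i ∈ Finset.range (n+2) |>.attach, cf i.1 i.2) * (x (n+2)).1) := by
    have hthis := hprod (n+2)
    have hx0 : ((x 0 : {z : R // z ∈ maximalIdeal R}) : R) = a := rfl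
    rw [hprod2, hx0] at hthis
    rw [hthis]; ring
  obtain ⟨r, hr⟩ := Ideal.mem_span_singleton.mp (hpow σ (hSm (x j)))
  -- hr : σ ^ (n+1) = a * r
  set w := (∏ i ∈ Finset.range (n+2) |>.attach, cf i.1 i.2) * (x (n+2)).1 * r with hwdef
  have hkey : σ ^ (n+1) * (1 - σ * w) = 0 := by
    have h1 : σ ^ (n+1) = σ ^ (n+2) * w := by
      rw [hr, ha]; ring
    calc σ ^ (n+1) * (1 - σ * w) = σ ^ (n+1) - σ ^ (n+2) * w := by ring
    _ = 0 := by rw [← h1]; ring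
  have hu : IsUnit (1 - σ * w) := unit_one_sub (Ideal.mul_mem_right _ _ (hSm (x j)))
  have hσ0 : σ ^ (n+1) = 0 := by
    rwa [IsUnit.mul_left_eq_zero hu] at hkey
  apply ha0
  rw [ha]
  have : σ ^ (n+2) = σ ^ (n+1) * σ := by ring
  rw [this, hσ0]
  ring
lemma ideal_cofinal (hchain : IsChainRing R) (harch : IsArchimedeanLocal R) (I : Ideal R) :
    HasCofinalSeq I := by
  classical
  by_contra h
  have hbot : I ≠ ⊥ := by
    intro hb
    apply h
    refine ⟨fun _ => 0, fun _ => Ideal.zero_mem _, fun z hz => ⟨0, ?_⟩⟩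
    rw [hb] at hz
    simp only [Ideal.mem_bot] at hz
    simp [hz]
  obtain ⟨a, haI, ha0⟩ := (Submodule.ne_bot_iff _).mp hbot
  obtain ⟨ε, hεm, hεcof⟩ := maximalIdeal_cofinal hchain harch
  have hcover : ∀ z ∈ I, ∃ m, z ∈ Ideal.span {ε m} * I := by
    intro z hz
    obtain ⟨y, ⟨hyI, hy0⟩, s, hsm, hzs⟩ := step_lemma hchain h hz
    obtain ⟨m, hm⟩ := hεcof s hsm
    obtain ⟨c, hc⟩ := Ideal.mem_span_singleton.mp hm
    refine ⟨m, ?_⟩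
    have h1 : ε m * y ∈ Ideal.span {ε m} * I :=
      Ideal.mul_mem_mul (Ideal.mem_span_singleton_self _) hyI
    have h2 : z = c * (ε m * y) := by rw [hzs, hc]; ring
    rw [h2]
    exact Ideal.mul_mem_left _ _ h1
  obtain ⟨k, hk⟩ := cover_of_not_cofinal hchain h (fun m => Ideal.span {ε m} * I) hcover
  set e := ε k with he
  have hem : e ∈ maximalIdeal R := hεm k
  have hpowle : ∀ j : ℕ, I ≤ Ideal.span {e ^ (j+1)} * I := by
    intro j
    induction j with
    | zero => simpa using hk
    | succ j ih =>
      calc I ≤ Ideal.span {e} * I := hk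
      _ ≤ Ideal.span {e} * (Ideal.span {e ^ (j+1)} * I) := Ideal.mul_mono_right ih
      _ = Ideal.span {e ^ (j+2)} * I := by
          rw [← mul_assoc, Ideal.span_singleton_mul_span_singleton, ← pow_succ']
  have hainspan : ∀ j : ℕ, a ∈ Ideal.span {e ^ (j+1)} :=
    fun j => Ideal.mul_le_left (hpowle j haI)
  by_cases hnil : ∃ j : ℕ, e ^ (j+1) = 0
  · obtain ⟨j, hj⟩ := hnil
    have := hainspan j
    rw [hj] at this
    obtain ⟨c, hc⟩ := Ideal.mem_span_singleton.mp this
    exact ha0 (by rw [hc]; ring)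
  push_neg at hnil
  set P : Ideal R := ⨅ j : ℕ, Ideal.span {e ^ (j+1)} with hPdef
  have hmemP : ∀ z : R, z ∈ P ↔ ∀ j, z ∈ Ideal.span {e ^ (j+1)} :=
    fun z => Submodule.mem_iInf _
  have hPprime : P.IsPrime := by
    constructor
    · intro htop
      have h1 : (1 : R) ∈ P := htop ▸ Submodule.mem_top
      obtain ⟨c, hc⟩ := Ideal.mem_span_singleton.mp ((hmemP 1).mp h1 0)
      have hue : IsUnit e := IsUnit.of_mul_eq_one (a := e) c (by simpa using hc.symm)
      exact (IsLocalRing.maximalIdeal.isMaximal R).ne_top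
        (Ideal.eq_top_of_isUnit_mem _ hem hue)
    · intro x y hxy
      by_contra hcon
      push_neg at hcon
      obtain ⟨hx, hy⟩ := hcon
      have hex : ∃ nx, x ∉ Ideal.span {e ^ (nx+1)} := by
        by_contra hcx; push_neg at hcx
        exact hx ((hmemP x).mpr hcx)
      have hey : ∃ ny, y ∉ Ideal.span {e ^ (ny+1)} := by
        by_contra hcy; push_neg at hcy
        exact hy ((hmemP y).mpr hcy)
      obtain ⟨nx, hnx⟩ := hex
      obtain ⟨ny, hny⟩ := hey
      have hdx : x ∣ e ^ (nx+1) := by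
        rcases chain_dvd hchain x (e ^ (nx+1)) with hd | hd
        · exact hd
        · exact absurd (Ideal.mem_span_singleton.mpr hd) hnx
      have hdy : y ∣ e ^ (ny+1) := by
        rcases chain_dvd hchain y (e ^ (ny+1)) with hd | hd
        · exact hd
        · exact absurd (Ideal.mem_span_singleton.mpr hd) hny
      obtain ⟨c, hc⟩ := hdx
      obtain ⟨d, hd⟩ := hdy
      obtain ⟨r, hrr⟩ := Ideal.mem_span_singleton.mp ((hmemP _).mp hxy (nx + ny + 2))
      -- hrr : x * y = e ^ (nx+ny+3) * r
      have hkey : e ^ (nx + ny + 2) * (1 - e * (r * c * d)) = 0 := by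
        have h1 : e ^ (nx + ny + 2) = e ^ (nx+1) * e ^ (ny+1) := by ring
        have h2 : e ^ (nx + ny + 2) = x * y * (c * d) := by rw [h1, hc, hd]; ring
        have h3 : e ^ (nx + ny + 3) = e ^ (nx + ny + 2) * e := by ring
        calc e ^ (nx + ny + 2) * (1 - e * (r * c * d))
            = e ^ (nx + ny + 2) - (e ^ (nx + ny + 3) * r) * (c * d) := by ring
        _ = e ^ (nx + ny + 2) - (x * y) * (c * d) := by rw [← hrr]
        _ = 0 := by rw [← h2]; ring
      have hu : IsUnit (1 - e * (r * c * d)) :=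
        unit_one_sub (Ideal.mul_mem_right _ _ hem)
      have : e ^ (nx + ny + 2) = 0 := by rwa [IsUnit.mul_left_eq_zero hu] at hkey
      exact hnil (nx + ny + 1) (by rw [← this])
  have hPbot : P ≠ ⊥ := by
    intro hb
    have : a ∈ P := (hmemP a).mpr hainspan
    rw [hb] at this
    exact ha0 this
  have hPm := harch P hPprime hPbot
  have heP : e ∈ P := hPm ▸ hem
  obtain ⟨c, hc⟩ := Ideal.mem_span_singleton.mp ((hmemP e).mp heP 1)
  -- hc : e = e^2 * c
  have hkey2 : e * (1 - e * c) = 0 := by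
    calc e * (1 - e * c) = e - (e ^ 2 * c) := by ring
    _ = 0 := by rw [← hc]; ring
  have hu2 : IsUnit (1 - e * c) := unit_one_sub (Ideal.mul_mem_right _ _ hem)
  have : e = 0 := by rwa [IsUnit.mul_left_eq_zero hu2] at hkey2
  exact hnil 0 (by simpa using this)


section Mod

variable {Y : Type u} [AddCommGroup Y] [Module R Y]

/-- In an injective module, an element killed by the annihilator of `a` is divisible by `a`. -/
lemma smul_surj_of_ann (hY : Module.Injective R Y) (a : R) (y : Y)
    (h : ∀ r : R, r * a = 0 → r • y = 0) : ∃ u : Y, a • u = y := by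
  classical
  have wd : ∀ c c' : R, a * c = a * c' → c • y = c' • y := by
    intro c c' hcc
    have h0 : (c - c') * a = 0 := by
      rw [sub_mul, mul_comm c a, mul_comm c' a, hcc, sub_self]
    have := h _ h0
    rw [sub_smul, sub_eq_zero] at this
    exact this
  have hdvd : ∀ x : ↥(Ideal.span ({a} : Set R)), ∃ c : R, (x : R) = a * c := by
    rintro ⟨x, hx⟩
    obtain ⟨c, hc⟩ := Ideal.mem_span_singleton.mp hx
    exact ⟨c, hc⟩
  choose cf hcf using hdvd
  have key : ∀ (x : ↥(Ideal.span ({a} : Set R))) (c : R), (x : R) = a * c →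
      cf x • y = c • y := by
    intro x c hc
    exact wd _ _ (by rw [← hcf x, hc])
  let φ : ↥(Ideal.span ({a} : Set R)) →ₗ[R] Y :=
    { toFun := fun x => cf x • y
      map_add' := by
        intro x x'
        show cf (x + x') • y = cf x • y + cf x' • y
        rw [key (x + x') (cf x + cf x') (by rw [mul_add, ← hcf x, ← hcf x']; rfl), add_smul]
      map_smul' := by
        intro r x
        show cf (r • x) • y = r • (cf x • y)
        rw [key (r • x) (r * cf x) (by rw [← mul_assoc, mul_comm a r, mul_assoc, ← hcf x]; rfl)]
        rw [mul_smul] }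
  obtain ⟨ψ, hψ⟩ := hY.out (Ideal.span ({a} : Set R)).subtype
    (Submodule.injective_subtype _) φ
  refine ⟨ψ 1, ?_⟩
  have h1 : a • ψ 1 = ψ a := by
    rw [← map_smul, smul_eq_mul, mul_one]
  have h2 : ψ a = φ ⟨a, Ideal.mem_span_singleton_self a⟩ := by
    have := hψ ⟨a, Ideal.mem_span_singleton_self a⟩
    simpa using this
  rw [h1, h2]
  show cf _ • y = y
  rw [key ⟨a, Ideal.mem_span_singleton_self a⟩ 1 (by rw [mul_one])]
  rw [one_smul]

/-- coherence: annihilator of an element of `R` is finitely generated -/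
lemma ann_fg (hcoh : IsCoherentRing R) (a : R) : (annOf R a).FG := by
  have hfg : (Ideal.span ({a} : Set R)).FG := ⟨{a}, by simp⟩
  have hfp := hcoh _ hfg
  let p : R →ₗ[R] ↥(Ideal.span ({a} : Set R)) :=
    LinearMap.codRestrict _ (LinearMap.toSpanSingleton R R a)
      (fun c => Ideal.mul_mem_left _ c (Ideal.mem_span_singleton_self a))
  have hsurj : Function.Surjective p := by
    rintro ⟨x, hx⟩
    obtain ⟨c, hc⟩ := Ideal.mem_span_singleton.mp hx
    refine ⟨c, ?_⟩
    apply Subtype.ext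
    show c • a = x
    rw [smul_eq_mul, hc]; ring
  have := Module.FinitePresentation.fg_ker (h := hfp) p hsurj
  rwa [show LinearMap.ker p = annOf R a from LinearMap.ker_codRestrict _ _ _] at this

/-- purity extraction -/
lemma pure_extract {X : Submodule R Y} (hX : IsPureSubmodule X) (r : R) (y : Y)
    (h : r • y ∈ X) : ∃ x ∈ X, r • y = r • x := by
  have hfg : (Ideal.span ({r} : Set R)).FG := ⟨{r}, by simp⟩
  have h2 : r • y ∈ (Ideal.span ({r} : Set R) • (⊤ : Submodule R Y)) ⊓ X :=
    ⟨Submodule.smul_mem_smul (Ideal.mem_span_singleton_self r) Submodule.mem_top, h⟩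
  rw [hX _ hfg, Submodule.ideal_span_singleton_smul] at h2
  obtain ⟨x, hx, hxx⟩ := Submodule.mem_map.mp h2
  exact ⟨x, hx, hxx.symm⟩

lemma mem_annOf_iff (r a : R) : r ∈ annOf R a ↔ r * a = 0 := by
  simp [annOf, LinearMap.mem_ker, LinearMap.toSpanSingleton_apply, smul_eq_mul]

/-- division in the quotient module -/
lemma divM (hchain : IsChainRing R) (hcoh : IsCoherentRing R) {X : Submodule R Y}
    (hY : Module.Injective R Y) (hX : IsPureSubmodule X)
    (a : R) (w : Y ⧸ X) (h : ∀ r : R, r * a = 0 → r • w = 0) :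
    ∃ z : Y ⧸ X, a • z = w := by
  obtain ⟨b, hb⟩ := fg_principal hchain (ann_fg hcoh a)
  have hba : b * a = 0 :=
    (mem_annOf_iff b a).mp (by rw [hb]; exact Ideal.mem_span_singleton_self b)
  obtain ⟨y, hy⟩ := Submodule.mkQ_surjective X w
  have hby : b • y ∈ X := by
    rw [← Submodule.Quotient.mk_eq_zero]
    show X.mkQ (b • y) = 0
    rw [map_smul, hy]
    exact h b hba
  obtain ⟨x, hxX, hbx⟩ := pure_extract hX b y hby
  set y' := y - x with hy'def
  have hy' : X.mkQ y' = w := by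
    have hx0 : X.mkQ x = 0 := (Submodule.Quotient.mk_eq_zero X).mpr hxX
    rw [hy'def, map_sub, hy, hx0, sub_zero]
  have hann' : ∀ r : R, r * a = 0 → r • y' = 0 := by
    intro r hr
    have hrb : r ∈ Ideal.span {b} := by
      rw [← hb]; exact (mem_annOf_iff r a).mpr hr
    obtain ⟨c, hc⟩ := Ideal.mem_span_singleton.mp hrb
    rw [hc, mul_comm, mul_smul, hy'def, smul_sub, ← hbx, sub_self, smul_zero]
  obtain ⟨u, hu⟩ := smul_surj_of_ann hY a y' hann'
  refine ⟨X.mkQ u, ?_⟩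
  rw [← map_smul, hu, hy']

end Mod

end AuxChain

theorem stmt3 (R : Type u) [CommRing R] [IsLocalRing R]
    (hchain : IsChainRing R) (harch : IsArchimedeanLocal R) (hcoh : IsCoherentRing R)
    (Y : Type u) [AddCommGroup Y] [Module R Y] (hY : Module.Injective R Y)
    (X : Submodule R Y) (hX : IsPureSubmodule X) :
    Module.Injective R (Y ⧸ X) := by
  classical
  apply Module.Baer.injective
  intro I f
  obtain ⟨u, huI, hucof⟩ := ideal_cofinal hchain harch I
  -- monotone cofinal chain
  let b : ℕ → R := fun n =>
    Nat.rec (u 0) (fun k bk => if u (k+1) ∈ Ideal.span {bk} then bk else u (k+1)) n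
  have hbsucc : ∀ n, b (n+1) = if u (n+1) ∈ Ideal.span {b n} then b n else u (n+1) :=
    fun n => rfl
  have hbI : ∀ n, b n ∈ I := by
    intro n
    induction n with
    | zero => exact huI 0
    | succ n ih =>
      rw [hbsucc n]
      split
      · exact ih
      · exact huI (n+1)
  have hbmono : ∀ n, b n ∈ Ideal.span {b (n+1)} := by
    intro n
    rw [hbsucc n]
    split
    · exact Ideal.mem_span_singleton_self _
    · rename_i hni
      rcases chain_dvd hchain (b n) (u (n+1)) with hd | hd
      · exact absurd (Ideal.mem_span_singleton.mpr hd) hni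
      · exact Ideal.mem_span_singleton.mpr hd
  have hble : ∀ n m, n ≤ m → Ideal.span {b n} ≤ Ideal.span {b m} := by
    intro n m hnm
    induction m, hnm using Nat.le_induction with
    | base => exact le_rfl
    | succ m hm ih =>
      exact le_trans ih ((Ideal.span_singleton_le_iff_mem _).mpr (hbmono m))
  have hbcof : ∀ x ∈ I, ∃ n, x ∈ Ideal.span {b n} := by
    intro x hx
    obtain ⟨n, hn⟩ := hucof x hx
    have hub : u n ∈ Ideal.span {b n} := by
      cases n with
      | zero => exact Ideal.mem_span_singleton_self _
      | succ k =>
        rw [hbsucc k]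
        split
        · assumption
        · exact Ideal.mem_span_singleton_self _
    obtain ⟨c, hc⟩ := Ideal.mem_span_singleton.mp hn
    rw [hc]
    exact ⟨n, Ideal.mul_mem_right c _ hub⟩
  have hs : ∀ n, ∃ sn, b n = b (n+1) * sn := fun n => Ideal.mem_span_singleton.mp (hbmono n)
  choose s hsspec using hs
  set w : ℕ → Y ⧸ X := fun n => f ⟨b n, hbI n⟩ with hwdef
  have hann : ∀ (n : ℕ) (r : R), r * b n = 0 → r • w n = 0 := by
    intro n r hr
    have h1 : r • (⟨b n, hbI n⟩ : ↥I) = 0 := by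
      apply Subtype.ext
      show r • b n = 0
      rw [smul_eq_mul, hr]
    show r • f ⟨b n, hbI n⟩ = 0
    rw [← map_smul, h1, map_zero]
  have hz : ∀ n, ∃ zz, b n • zz = w n :=
    fun n => divM hchain hcoh hY hX (b n) (w n) (hann n)
  choose z hzspec using hz
  have hv : ∀ n, ∃ vv : Y, X.mkQ vv = z n := fun n => Submodule.mkQ_surjective X (z n)
  choose v hvspec using hv
  have hwv : ∀ n, X.mkQ (b n • v n) = w n := by
    intro n
    rw [map_smul, hvspec, hzspec]
  have hwv' : ∀ n, X.mkQ (b n • v (n+1)) = w n := by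
    intro n
    have hlast : s n • w (n+1) = w n := by
      show s n • f ⟨b (n+1), hbI (n+1)⟩ = f ⟨b n, hbI n⟩
      rw [← map_smul]
      congr 1
      apply Subtype.ext
      show s n • b (n+1) = b n
      rw [smul_eq_mul, mul_comm, ← hsspec n]
    calc X.mkQ (b n • v (n+1)) = b n • z (n+1) := by rw [map_smul, hvspec]
    _ = (b (n+1) * s n) • z (n+1) := by rw [← hsspec n]
    _ = s n • (b (n+1) • z (n+1)) := by rw [mul_comm, mul_smul]
    _ = s n • w (n+1) := by rw [hzspec (n+1)]
    _ = w n := hlast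
  have hdiff : ∀ n, b n • (v (n+1) - v n) ∈ X := by
    intro n
    rw [← Submodule.Quotient.mk_eq_zero]
    show X.mkQ (b n • (v (n+1) - v n)) = 0
    rw [smul_sub, map_sub, hwv, hwv', sub_self]
  have hpx : ∀ n, ∃ x ∈ X, b n • (v (n+1) - v n) = b n • x :=
    fun n => pure_extract hX _ _ (hdiff n)
  choose xx hxxX hxxspec using hpx
  set yy : ℕ → Y := fun n => v n - ∑ i ∈ Finset.range n, xx i with hyydef
  have hyystep : ∀ n, yy (n+1) - yy n = (v (n+1) - v n) - xx n := by
    intro n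
    show (v (n+1) - ∑ i ∈ Finset.range (n+1), xx i) - (v n - ∑ i ∈ Finset.range n, xx i) = _
    rw [Finset.sum_range_succ]
    abel
  have hbyy : ∀ n, b n • (yy (n+1) - yy n) = 0 := by
    intro n
    rw [hyystep n, smul_sub, hxxspec n, sub_self]
  have hyyw : ∀ n, X.mkQ (b n • yy n) = w n := by
    intro n
    have hsum : (∑ i ∈ Finset.range n, xx i) ∈ X :=
      Submodule.sum_mem _ (fun i _ => hxxX i)
    have : b n • yy n = b n • v n - b n • (∑ i ∈ Finset.range n, xx i) := by
      rw [hyydef]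
      show b n • (v n - ∑ i ∈ Finset.range n, xx i) = _
      rw [smul_sub]
    have h0 : X.mkQ (b n • ∑ i ∈ Finset.range n, xx i) = 0 := by
      rw [Submodule.mkQ_apply]
      exact (Submodule.Quotient.mk_eq_zero X).mpr (Submodule.smul_mem _ _ hsum)
    rw [this, map_sub, hwv, h0, sub_zero]
  have wd : ∀ n m, n ≤ m → ∀ x : R, x ∈ Ideal.span {b n} → x • yy m = x • yy n := by
    intro n m hnm
    induction m, hnm using Nat.le_induction with
    | base => intro x _; rfl
    | succ m hm ih =>
      intro x hxmem
      have hxm : x ∈ Ideal.span {b m} := hble n m hm hxmem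
      obtain ⟨c, hc⟩ := Ideal.mem_span_singleton.mp hxm
      have h0 : x • (yy (m+1) - yy m) = 0 := by
        rw [hc, mul_comm, mul_smul, hbyy m, smul_zero]
      have : x • yy (m+1) = x • yy m := by
        have := sub_eq_zero.mp (by rwa [smul_sub] at h0)
        exact this
      rw [this, ih x hxmem]
  -- choice of index
  have hpick : ∀ x : ↥I, ∃ n, (x : R) ∈ Ideal.span {b n} := fun x => hbcof x.1 x.2
  choose pick hpickspec using hpick
  have gval : ∀ (x : ↥I) (m : ℕ), (x : R) ∈ Ideal.span {b m} →
      (x : R) • yy m = (x : R) • yy (pick x) := by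
    intro x m hm
    rcases le_total (pick x) m with hle | hle
    · exact wd (pick x) m hle _ (hpickspec x)
    · exact (wd m (pick x) hle _ hm).symm
  let g : ↥I →ₗ[R] Y :=
    { toFun := fun x => (x : R) • yy (pick x)
      map_add' := by
        intro x x'
        show ((x + x' : ↥I) : R) • yy (pick (x + x')) =
          (x : R) • yy (pick x) + (x' : R) • yy (pick x')
        set M := max (pick x) (pick x') with hM
        have hmx : (x : R) ∈ Ideal.span {b M} := hble _ _ (le_max_left _ _) (hpickspec x)
        have hmx' : (x' : R) ∈ Ideal.span {b M} := hble _ _ (le_max_right _ _) (hpickspec x')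
        have hmxx' : ((x + x' : ↥I) : R) ∈ Ideal.span {b M} := by
          rw [Submodule.coe_add]
          exact Ideal.add_mem _ hmx hmx'
        rw [← gval (x + x') M hmxx', ← gval x M hmx, ← gval x' M hmx']
        rw [Submodule.coe_add, add_smul]
      map_smul' := by
        intro r x
        show ((r • x : ↥I) : R) • yy (pick (r • x)) = r • ((x : R) • yy (pick x))
        have hmem : ((r • x : ↥I) : R) ∈ Ideal.span {b (pick x)} := by
          rw [Submodule.coe_smul, smul_eq_mul]
          exact Ideal.mul_mem_left _ _ (hpickspec x)
        rw [← gval (r • x) (pick x) hmem, Submodule.coe_smul, smul_eq_mul, mul_smul] }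
  obtain ⟨ψ, hψ⟩ := hY.out I.subtype (Submodule.injective_subtype I) g
  refine ⟨X.mkQ.comp (LinearMap.toSpanSingleton R Y (ψ 1)), ?_⟩
  intro x mem
  show X.mkQ (x • ψ 1) = f ⟨x, mem⟩
  have h1 : x • ψ 1 = ψ x := by
    rw [← map_smul, smul_eq_mul, mul_one]
  have h2 : ψ x = g ⟨x, mem⟩ := by
    have := hψ ⟨x, mem⟩
    simpa using this
  rw [h1, h2]
  show X.mkQ ((x : R) • yy (pick ⟨x, mem⟩)) = f ⟨x, mem⟩
  set p := pick ⟨x, mem⟩ with hpdef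
  obtain ⟨c, hc⟩ := Ideal.mem_span_singleton.mp (hpickspec ⟨x, mem⟩)
  have hxc : x = c * b p := by
    show x = c * b (pick ⟨x, mem⟩)
    rw [mul_comm]
    exact hc
  calc X.mkQ (x • yy p) = X.mkQ ((c * b p) • yy p) := by rw [← hxc]
  _ = c • X.mkQ (b p • yy p) := by rw [mul_smul, map_smul]
  _ = c • w p := by rw [hyyw p]
  _ = c • f ⟨b p, hbI p⟩ := rfl
  _ = f (c • ⟨b p, hbI p⟩) := (map_smul f c _).symm
  _ = f ⟨x, mem⟩ := by
      congr 1
      apply Subtype.ext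
      show c • b p = x
      rw [smul_eq_mul, ← hxc]
end

section
/- Let R be a non-noetherian archimedean valuation ring that is an IF-ring, and let E be a nonzero fp-injective R-module. Then E contains a faithful uniserial pure submodule U. Moreover, if there exists y in E with (0 : y) = 0 then U can be chosen to be Ry; otherwise U is necessarily not finitely generated. -/
open IsLocalRing

universe u

section Stmt6AuxSection

namespace Stmt6Aux

open Pointwise

variable {R : Type u} [CommRing R]

theorem mem_annOf {M : Type u} [AddCommGroup M] [Module R M] (x : M) (r : R) :
    r ∈ annOf R x ↔ r • x = 0 := by
  simp [annOf, LinearMap.mem_ker, LinearMap.toSpanSingleton_apply]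

theorem mem_ptsmul {M : Type u} [AddCommGroup M] [Module R M] (a : R) (S : Submodule R M)
    (z : M) : z ∈ a • S ↔ ∃ s, s ∈ S ∧ a • s = z :=
  Submodule.mem_map

theorem chain_dvd (hchain : IsChainRing R) (a b : R) : a ∣ b ∨ b ∣ a := by
  rcases hchain (Ideal.span {a}) (Ideal.span {b}) with h | h
  · exact Or.inr (Ideal.span_singleton_le_span_singleton.mp h)
  · exact Or.inl (Ideal.span_singleton_le_span_singleton.mp h)

theorem one_sub_unit [IsLocalRing R] {z : R} (hz : z ∈ maximalIdeal R) :
    IsUnit (1 - z) := by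
  by_contra h
  have h1 : (1 : R) - z ∈ maximalIdeal R := (mem_maximalIdeal _).mpr (mem_nonunits_iff.mpr h)
  have h2 : (1 : R) ∈ maximalIdeal R := by
    have := add_mem h1 hz; simpa using this
  exact (mem_nonunits_iff.mp ((mem_maximalIdeal _).mp h2)) isUnit_one

theorem unit_mul_eq_zero {uu w : R} (h : IsUnit uu) (hw : uu * w = 0) : w = 0 := by
  obtain ⟨v, rfl⟩ := h
  calc w = ((v⁻¹ : Rˣ) : R) * ((v : R) * w) := by
        rw [← mul_assoc, Units.inv_mul, one_mul]
    _ = 0 := by rw [hw, mul_zero]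

theorem unit_smul_eq_zero {M : Type u} [AddCommGroup M] [Module R M]
    {uu : R} {w : M} (h : IsUnit uu) (hw : uu • w = 0) : w = 0 := by
  obtain ⟨v, rfl⟩ := h
  calc w = ((v⁻¹ : Rˣ) : R) • ((v : R) • w) := by
        rw [smul_smul, Units.inv_mul, one_smul]
    _ = 0 := by rw [hw, smul_zero]

theorem pow_escape [IsLocalRing R] (hchain : IsChainRing R) (harch : IsArchimedeanLocal R)
    {b a : R} (hb : b ∈ maximalIdeal R) (ha : a ≠ 0) :
    ∃ k : ℕ, a ∉ Ideal.span {b ^ k} := by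
  by_contra hcon
  push_neg at hcon
  set I : Ideal R := ⨅ k : ℕ, Ideal.span {b ^ k} with hI
  have haI : a ∈ I := Submodule.mem_iInf _ |>.mpr hcon
  have hprime : I.IsPrime := by
    constructor
    · intro htop
      have h0 : (1 : R) ∈ I := by rw [htop]; trivial
      have h1 : (1 : R) ∈ Ideal.span {b ^ 1} := (Submodule.mem_iInf _).mp h0 1
      have : IsUnit b := isUnit_of_dvd_one (by simpa using Ideal.mem_span_singleton.mp h1)
      exact (mem_nonunits_iff.mp ((mem_maximalIdeal _).mp hb)) this
    · intro x y hxy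
      by_contra hcon2
      push_neg at hcon2
      obtain ⟨hx, hy⟩ := hcon2
      obtain ⟨j, hj⟩ : ∃ j, x ∉ Ideal.span {b ^ j} := by
        by_contra hc; push_neg at hc; exact hx ((Submodule.mem_iInf _).mpr hc)
      obtain ⟨l, hl⟩ : ∃ l, y ∉ Ideal.span {b ^ l} := by
        by_contra hc; push_neg at hc; exact hy ((Submodule.mem_iInf _).mpr hc)
      obtain ⟨uu, hu⟩ : x ∣ b ^ j := by
        rcases chain_dvd hchain (b ^ j) x with h | h
        · exact absurd (Ideal.mem_span_singleton.mpr h) hj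
        · exact h
      obtain ⟨w, hw⟩ : y ∣ b ^ l := by
        rcases chain_dvd hchain (b ^ l) y with h | h
        · exact absurd (Ideal.mem_span_singleton.mpr h) hl
        · exact h
      obtain ⟨z, hz⟩ : b ^ (j + l + 1) ∣ x * y :=
        Ideal.mem_span_singleton.mp ((Submodule.mem_iInf _).mp hxy (j + l + 1))
      have hkey : b ^ (j + l) * (1 - b * (z * uu * w)) = 0 := by
        have : b ^ (j + l) = b ^ (j + l) * (b * (z * uu * w)) := by
          calc b ^ (j + l) = (x * uu) * (y * w) := by rw [← hu, ← hw, pow_add]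
            _ = (x * y) * (uu * w) := by ring
            _ = b ^ (j + l + 1) * z * (uu * w) := by rw [hz]
            _ = b ^ (j + l) * (b * (z * uu * w)) := by rw [pow_succ]; ring
        rw [mul_sub, mul_one, ← this, sub_self]
      have hbjl : b ^ (j + l) = 0 := by
        have hunit : IsUnit (1 - b * (z * uu * w)) :=
          one_sub_unit (Ideal.mul_mem_right _ _ hb)
        have := unit_mul_eq_zero hunit (by rw [mul_comm]; exact hkey)
        exact this
      have : a ∈ Ideal.span {(0 : R)} := by
        have := (Submodule.mem_iInf _).mp haI (j + l)
        rwa [hbjl] at this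
      simp only [Ideal.span_singleton_eq_bot.mpr rfl, Submodule.mem_bot] at this
      exact ha this
  have hne : I ≠ ⊥ := fun h => ha (by rw [h] at haI; simpa using haI)
  have hIm : I = maximalIdeal R := harch I hprime hne
  have hbI : b ∈ I := hIm ▸ hb
  obtain ⟨z, hz⟩ : b ^ 2 ∣ b := Ideal.mem_span_singleton.mp ((Submodule.mem_iInf _).mp hbI 2)
  have hb0 : b = 0 := by
    have hkey : b * (1 - b * z) = 0 := by
      rw [mul_sub, mul_one, ← mul_assoc, ← pow_two, ← hz, sub_self]
    exact unit_mul_eq_zero (one_sub_unit (Ideal.mul_mem_right _ _ hb)) (by rw [mul_comm]; exact hkey)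
  have : a ∈ Ideal.span {(0 : R)} := by
    have := (Submodule.mem_iInf _).mp haI 1
    rwa [pow_one, hb0] at this
  simp only [Ideal.span_singleton_eq_bot.mpr rfl, Submodule.mem_bot] at this
  exact ha this

theorem div_of_ann {M : Type u} [AddCommGroup M] [Module R M] (hM : IsFpInjective R M)
    (a : R) (x : M) (h : ∀ r : R, r * a = 0 → r • x = 0) : ∃ y : M, a • y = x := by
  classical
  set v : Fin 1 → R := fun _ => a with hv
  set K : Submodule R (Fin 1 → R) := Submodule.span R {v} with hK
  have hmem : ∀ k : K, ∃ c : R, c • v = (k : Fin 1 → R) := fun k =>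
    Submodule.mem_span_singleton.mp k.2
  have key : ∀ c c' : R, c • v = c' • v → c • x = c' • x := by
    intro c c' hcc
    have h1 : (c - c') * a = 0 := by
      have h2 := congrFun hcc 0
      simp only [hv, Pi.smul_apply, smul_eq_mul] at h2
      rw [sub_mul, h2, sub_self]
    have h3 := h _ h1
    rwa [sub_smul, sub_eq_zero] at h3
  choose rep hrep using hmem
  have grep : ∀ (k : K) (c : R), c • v = (k : Fin 1 → R) → rep k • x = c • x := by
    intro k c hc; exact key _ _ (by rw [hrep k, ← hc])
  set g : K →ₗ[R] M :=
    { toFun := fun k => rep k • x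
      map_add' := by
        intro k1 k2
        have h4 : (rep k1 + rep k2) • v = ((k1 + k2 : K) : Fin 1 → R) := by
          rw [add_smul, hrep k1, hrep k2]; rfl
        show rep (k1 + k2) • x = rep k1 • x + rep k2 • x
        rw [grep (k1 + k2) _ h4, add_smul]
      map_smul' := by
        intro r k
        have h4 : (r * rep k) • v = ((r • k : K) : Fin 1 → R) := by
          rw [mul_smul, hrep k]; rfl
        show rep (r • k) • x = r • (rep k • x)
        rw [grep (r • k) _ h4, mul_smul] } with hg
  obtain ⟨h', hh'⟩ := hM 1 K ⟨{v}, by rw [Finset.coe_singleton, hK]⟩ g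
  refine ⟨h' (fun _ => 1), ?_⟩
  have hv' : a • (fun _ => (1 : R)) = v := by funext i; simp [hv]
  have hvK : v ∈ K := Submodule.subset_span rfl
  have h5 : h' v = g ⟨v, hvK⟩ := hh' ⟨v, hvK⟩
  rw [← map_smul, hv', h5]
  show rep ⟨v, hvK⟩ • x = x
  rw [grep ⟨v, hvK⟩ 1 (one_smul _ _), one_smul]

theorem mem_span_of_ann (hIF2 : IsFpInjective R R) (a s : R)
    (h : ∀ r : R, r * a = 0 → r * s = 0) : s ∈ Ideal.span {a} := by
  obtain ⟨y, hy⟩ := div_of_ann hIF2 a s (by intro r hr; rw [smul_eq_mul]; exact h r hr)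
  exact Ideal.mem_span_singleton.mpr ⟨y, by rw [← hy, smul_eq_mul]⟩

theorem exists_ann_ne_zero (hIF2 : IsFpInjective R R) {g : R} (hg0 : g ≠ 0)
    (hgu : ¬IsUnit g) : ∃ p : R, p ≠ 0 ∧ p * g = 0 := by
  by_contra hc
  push_neg at hc
  have h1 : (1 : R) ∈ Ideal.span {g} := by
    apply mem_span_of_ann hIF2
    intro r hr
    rcases eq_or_ne r 0 with rfl | hr0
    · rw [zero_mul]
    · exact absurd hr (hc r hr0)
  exact hgu (isUnit_of_dvd_one (by simpa using Ideal.mem_span_singleton.mp h1))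

theorem fg_principal (hchain : IsChainRing R) (I : Ideal R) (hI : I.FG) :
    ∃ g : R, I = Ideal.span {g} := by
  obtain ⟨s, rfl⟩ := hI
  classical
  induction s using Finset.induction_on with
  | empty =>
    refine ⟨0, ?_⟩
    rw [Finset.coe_empty, Ideal.span_empty]
    exact (Ideal.span_singleton_eq_bot.mpr rfl).symm
  | insert _ _ hx ih =>
    rename_i z s'
    obtain ⟨g, hg⟩ := ih
    rw [Finset.coe_insert, Ideal.span_insert, hg]
    rcases hchain (Ideal.span {z}) (Ideal.span {g}) with h | h
    · exact ⟨g, sup_eq_right.mpr h⟩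
    · exact ⟨z, sup_eq_left.mpr h⟩

theorem ann_principal (hcoh : IsCoherentRing R) (hchain : IsChainRing R) (a : R) :
    ∃ g : R, annOf R a = Ideal.span {g} := by
  have hfp : Module.FinitePresentation R ↥(Ideal.span {a}) :=
    hcoh _ ⟨{a}, by rw [Finset.coe_singleton]⟩
  set φ : R →ₗ[R] ↥(Ideal.span {a} : Ideal R) :=
    LinearMap.toSpanSingleton R _ ⟨a, Ideal.subset_span rfl⟩ with hφ
  have hsurj : Function.Surjective φ := by
    rintro ⟨z, hz⟩
    obtain ⟨cc, hc⟩ := Ideal.mem_span_singleton.mp hz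
    refine ⟨cc, Subtype.ext ?_⟩
    show cc • a = z
    rw [smul_eq_mul, hc, mul_comm]
  haveI := hfp
  have hfg : (LinearMap.ker φ).FG := Module.FinitePresentation.fg_ker φ hsurj
  have hker : LinearMap.ker φ = annOf R a := by
    ext r
    simp only [LinearMap.mem_ker, hφ, LinearMap.toSpanSingleton_apply, mem_annOf]
    constructor
    · intro h; have := congrArg (Subtype.val) h; simpa using this
    · intro h; exact Subtype.ext (by simpa using h)
  rw [← hker]
  exact fg_principal hchain _ hfg

theorem noeth_of_principal_max [IsLocalRing R] (hchain : IsChainRing R)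
    (harch : IsArchimedeanLocal R) {cc : R} (hm : maximalIdeal R = Ideal.span {cc}) :
    IsNoetherianRing R := by
  rw [isNoetherianRing_iff_ideal_fg]
  intro I
  by_cases htop : I = ⊤
  · exact htop ▸ ⟨{1}, by simp⟩
  have hIm : I ≤ maximalIdeal R := le_maximalIdeal htop
  by_cases hbot : I = ⊥
  · exact hbot ▸ ⟨∅, by simp⟩
  have hcc : cc ∈ maximalIdeal R := hm ▸ Ideal.subset_span rfl
  obtain ⟨x, hxI, hx0⟩ := Submodule.exists_mem_ne_zero_of_ne_bot hbot
  have hex : ∃ k, ¬ I ≤ Ideal.span {cc ^ k} := by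
    obtain ⟨k, hk⟩ := pow_escape hchain harch hcc hx0
    exact ⟨k, fun hle => hk (hle hxI)⟩
  classical
  have hKspec : ¬ I ≤ Ideal.span {cc ^ (Nat.find hex)} := Nat.find_spec hex
  set K := Nat.find hex with hKdef
  have hK0 : K ≠ 0 := by
    intro h0
    apply hKspec
    rw [h0, pow_zero, Ideal.span_singleton_one]
    exact le_top
  have hprev : I ≤ Ideal.span {cc ^ (K - 1)} := by
    by_contra hcon
    exact Nat.find_min hex (by omega) hcon
  obtain ⟨x₀, hx₀I, hx₀n⟩ : ∃ z ∈ I, z ∉ Ideal.span {cc ^ K} := by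
    by_contra hcon; push_neg at hcon; exact hKspec hcon
  obtain ⟨uu, hu⟩ := Ideal.mem_span_singleton.mp (hprev hx₀I)
  have huu : IsUnit uu := by
    by_contra hnu
    have h1 : uu ∈ maximalIdeal R := (mem_maximalIdeal uu).mpr (mem_nonunits_iff.mpr hnu)
    rw [hm] at h1
    obtain ⟨w, hw⟩ := Ideal.mem_span_singleton.mp h1
    apply hx₀n
    refine Ideal.mem_span_singleton.mpr ⟨w, ?_⟩
    rw [hu, hw, ← mul_assoc, ← pow_succ]
    congr 2
    omega
  obtain ⟨v, hv⟩ := huu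
  have hccI : cc ^ (K - 1) ∈ I := by
    have h2 : x₀ * ((v⁻¹ : Rˣ) : R) ∈ I := Ideal.mul_mem_right _ _ hx₀I
    have h3 : x₀ * ((v⁻¹ : Rˣ) : R) = cc ^ (K - 1) := by
      rw [hu, ← hv, mul_assoc, Units.mul_inv, mul_one]
    rwa [h3] at h2
  refine ⟨{cc ^ (K - 1)}, ?_⟩
  rw [Finset.coe_singleton]
  exact le_antisymm (Ideal.span_le.mpr (by simpa using hccI)) hprev

theorem half [IsLocalRing R] (hchain : IsChainRing R)
    (mnp : ∀ g : R, maximalIdeal R ≠ Ideal.span {g}) {b : R}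
    (hb : b ∈ maximalIdeal R) (hb0 : b ≠ 0) :
    ∃ b' : R, b' ∈ maximalIdeal R ∧ b' ≠ 0 ∧ b' ^ 2 ∣ b := by
  have hnle : ¬ maximalIdeal R ≤ Ideal.span {b} := by
    intro hle
    exact mnp b (le_antisymm hle (Ideal.span_le.mpr (by simpa using hb)))
  obtain ⟨e, hem, heb⟩ := SetLike.not_le_iff_exists.mp hnle
  have he0 : e ≠ 0 := fun h => heb (by rw [h]; exact Ideal.zero_mem _)
  obtain ⟨d, hd⟩ : e ∣ b := by
    rcases chain_dvd hchain b e with h | h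
    · exact absurd (Ideal.mem_span_singleton.mpr h) heb
    · exact h
  have hd0 : d ≠ 0 := fun h => hb0 (by rw [hd, h, mul_zero])
  rcases chain_dvd hchain e d with ⟨z, hz⟩ | ⟨z, hz⟩
  · -- d = e * z : b = e^2 * z
    exact ⟨e, hem, he0, ⟨z, by rw [hd, hz, pow_two]; ring⟩⟩
  ·
    have hdm : d ∈ maximalIdeal R := by
      rw [mem_maximalIdeal, mem_nonunits_iff]
      intro hdu
      apply heb
      obtain ⟨w, hw⟩ := hdu
      refine Ideal.mem_span_singleton.mpr ⟨((w⁻¹ : Rˣ) : R), ?_⟩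
      rw [hd, mul_assoc, ← hw, Units.mul_inv, mul_one]
    exact ⟨d, hdm, hd0, ⟨z, by rw [hd, hz]; ring⟩⟩

section ModSide

variable {R : Type u} [CommRing R] [IsLocalRing R]
variable {E : Type u} [AddCommGroup E] [Module R E]

theorem desc (hchain : IsChainRing R) (harch : IsArchimedeanLocal R)
    (b : ℕ → R) (hb0 : ∀ k, b k ≠ 0)
    (hb2 : ∀ k, (b (k + 1)) ^ 2 ∣ b k) (n : ℕ) (c : R) (hcu : ¬IsUnit c)
    (hdvd : ∀ k, n ≤ k → c ∣ b k) : False := by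
  have hc0 : c ≠ 0 := by rintro rfl; exact hb0 n (zero_dvd_iff.mp (hdvd n le_rfl))
  have hcm : c ∈ maximalIdeal R := (mem_maximalIdeal c).mpr (mem_nonunits_iff.mpr hcu)
  obtain ⟨K, hK⟩ := pow_escape hchain harch hcm (hb0 n)
  have hpow : ∀ i, (b (n + i)) ^ (2 ^ i) ∣ b n := by
    intro i
    induction i with
    | zero => simpa using dvd_rfl
    | succ i ih =>
      refine dvd_trans ?_ ih
      have h1 : ((b (n + i + 1)) ^ 2) ^ (2 ^ i) ∣ (b (n + i)) ^ (2 ^ i) :=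
        pow_dvd_pow_of_dvd (hb2 (n + i)) _
      have h2 : ((b (n + i + 1)) ^ 2) ^ (2 ^ i) = (b (n + i + 1)) ^ (2 ^ (i + 1)) := by
        rw [← pow_mul]
        congr 1
        rw [pow_succ, Nat.mul_comm]
      have h3 : n + (i + 1) = n + i + 1 := by omega
      rw [h3, ← h2]
      exact h1
  apply hK
  obtain ⟨i, hi⟩ : ∃ i : ℕ, K ≤ 2 ^ i := ⟨K, (Nat.lt_two_pow_self (n := K)).le⟩
  refine Ideal.mem_span_singleton.mpr (dvd_trans (pow_dvd_pow c hi) ?_)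
  exact dvd_trans (pow_dvd_pow_of_dvd (hdvd (n + i) (by omega)) _) (hpow i)

theorem ann_not_principal (hchain : IsChainRing R) (hcoh : IsCoherentRing R)
    (hIF2 : IsFpInjective R R) (hE : IsFpInjective R E)
    (hard : ∀ y : E, annOf R y ≠ ⊥)
    (x : E) (hx : x ≠ 0) (g : R) : annOf R x ≠ Ideal.span {g} := by
  intro hg
  have hgx : g • x = 0 := (mem_annOf x g).mp (hg ▸ Ideal.subset_span rfl)
  have hg0 : g ≠ 0 := by
    rintro rfl
    apply hard x
    rw [hg]
    exact Ideal.span_singleton_eq_bot.mpr rfl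
  have hgu : ¬IsUnit g := fun hu => hx (unit_smul_eq_zero hu hgx)
  obtain ⟨q, hq⟩ := ann_principal hcoh hchain g
  have hqg : q * g = 0 := by
    have h1 : q ∈ annOf R g := hq ▸ Ideal.subset_span rfl
    rwa [mem_annOf, smul_eq_mul] at h1
  have hdivhyp : ∀ r : R, r * q = 0 → r • x = 0 := by
    intro r hr
    have hgr : g ∣ r := by
      have h2 : r ∈ Ideal.span {g} := by
        apply mem_span_of_ann hIF2
        intro ρ hρ
        obtain ⟨σ, hσ⟩ : q ∣ ρ :=
          Ideal.mem_span_singleton.mp (hq ▸ (mem_annOf g ρ).mpr (by rwa [smul_eq_mul]))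
        rw [hσ]
        calc q * σ * r = σ * (r * q) := by ring
          _ = 0 := by rw [hr, mul_zero]
      exact Ideal.mem_span_singleton.mp h2
    obtain ⟨σ, rfl⟩ := hgr
    rw [mul_comm, mul_smul, hgx, smul_zero]
  obtain ⟨y, hy⟩ := div_of_ann hE q x hdivhyp
  apply hard y
  rw [eq_bot_iff]
  intro r hr
  rw [Submodule.mem_bot]
  rw [mem_annOf] at hr
  obtain ⟨σ, hσ⟩ : q ∣ r := by
    rcases chain_dvd hchain q r with h | h
    · exact h
    · obtain ⟨ρ, hρ⟩ := h
      exfalso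
      apply hx
      rw [← hy, hρ, mul_comm, mul_smul, hr, smul_zero]
  have hσx : σ • x = 0 := by
    rw [← hy, smul_smul, mul_comm σ q, ← hσ]
    exact hr
  obtain ⟨τ, hτ⟩ : g ∣ σ :=
    Ideal.mem_span_singleton.mp (by rw [← hg]; exact (mem_annOf x σ).mpr hσx)
  rw [hσ, hτ]
  calc q * (g * τ) = (q * g) * τ := by ring
    _ = 0 := by rw [hqg, zero_mul]

theorem step_lemma (hchain : IsChainRing R) (harch : IsArchimedeanLocal R)
    (hcoh : IsCoherentRing R) (hIF2 : IsFpInjective R R) (hE : IsFpInjective R E)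
    (hard : ∀ y : E, annOf R y ≠ ⊥)
    (x : E) (hx : x ≠ 0) (β : R) (hβm : β ∈ maximalIdeal R) (hβ0 : β ≠ 0) :
    ∃ (t α : R) (y : E),
      t • x = 0 ∧ t ≠ 0 ∧ (∀ u : R, u • x = 0 → t ∣ β * u) ∧
      α * t = 0 ∧ (∀ r : R, r * t = 0 → α ∣ r) ∧ ¬ IsUnit α ∧ α • y = x ∧ y ≠ 0 := by
  obtain ⟨t, htx, ht0, htd⟩ : ∃ t : R, t • x = 0 ∧ t ≠ 0 ∧ ∀ u : R, u • x = 0 → t ∣ β * u := by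
    by_contra hcon
    push_neg at hcon
    have hstep' : ∀ t : R, t • x = 0 → ∃ u' : R, u' • x = 0 ∧ t = β * u' := by
      intro t ht
      rcases eq_or_ne t 0 with rfl | ht0
      · exact ⟨0, by rw [zero_smul], by rw [mul_zero]⟩
      · obtain ⟨u, hux, hnd⟩ := hcon t ht ht0
        obtain ⟨σ, hσ⟩ : β * u ∣ t := by
          rcases chain_dvd hchain t (β * u) with h | h
          · exact absurd h hnd
          · exact h
        refine ⟨u * σ, ?_, by rw [hσ]; ring⟩
        rw [mul_comm, mul_smul, hux, smul_zero]
    obtain ⟨t₀, ht₀A, ht₀0⟩ := Submodule.exists_mem_ne_zero_of_ne_bot (hard x)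
    rw [mem_annOf] at ht₀A
    have hiter : ∀ k : ℕ, ∃ s : R, s • x = 0 ∧ t₀ = β ^ k * s := by
      intro k
      induction k with
      | zero => exact ⟨t₀, ht₀A, by rw [pow_zero, one_mul]⟩
      | succ k ih =>
        obtain ⟨s, hs, hts⟩ := ih
        obtain ⟨s', hs', hss'⟩ := hstep' s hs
        exact ⟨s', hs', by rw [hts, hss', pow_succ]; ring⟩
    obtain ⟨K, hK⟩ := pow_escape hchain harch hβm ht₀0
    obtain ⟨s, _, hts⟩ := hiter K
    exact hK (Ideal.mem_span_singleton.mpr ⟨s, hts⟩)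
  obtain ⟨α, hα⟩ := ann_principal hcoh hchain t
  have hαt : α * t = 0 := by
    have h1 : α ∈ annOf R t := hα ▸ Ideal.subset_span rfl
    rwa [mem_annOf, smul_eq_mul] at h1
  have hgen : ∀ r : R, r * t = 0 → α ∣ r := fun r hr =>
    Ideal.mem_span_singleton.mp (hα ▸ (mem_annOf t r).mpr (by rwa [smul_eq_mul]))
  have htu : ¬IsUnit t := fun hu => hx (unit_smul_eq_zero hu htx)
  have hα0 : α ≠ 0 := by
    obtain ⟨p, hp0, hpt⟩ := exists_ann_ne_zero hIF2 ht0 htu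
    intro h0
    obtain ⟨σ, hσ⟩ := hgen p hpt
    rw [h0, zero_mul] at hσ
    exact hp0 hσ
  have hαu : ¬IsUnit α := fun hu => ht0 (unit_mul_eq_zero hu hαt)
  have hdivh : ∀ r : R, r * α = 0 → r • x = 0 := by
    intro r hr
    obtain ⟨σ, hσ⟩ : t ∣ r := by
      have h2 : r ∈ Ideal.span {t} := by
        apply mem_span_of_ann hIF2
        intro ρ hρ
        obtain ⟨σ, hσ⟩ := hgen ρ hρ
        rw [hσ]
        calc α * σ * r = σ * (r * α) := by ring
          _ = 0 := by rw [hr, mul_zero]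
      exact Ideal.mem_span_singleton.mp h2
    rw [hσ, mul_comm, mul_smul, htx, smul_zero]
  obtain ⟨y, hy⟩ := div_of_ann hE α x hdivh
  exact ⟨t, α, y, htx, ht0, htd, hαt, hgen, hαu, hy,
    fun h0 => hx (by rw [← hy, h0, smul_zero])⟩

theorem hardcase (hchain : IsChainRing R) (harch : IsArchimedeanLocal R)
    (hnoeth : ¬ IsNoetherianRing R) (hcoh : IsCoherentRing R) (hIF2 : IsFpInjective R R)
    [Nontrivial E] (hE : IsFpInjective R E) (hard : ∀ y : E, annOf R y ≠ ⊥) :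
    ∃ U : Submodule R E, U ≠ ⊥ ∧ IsUniserialSub U ∧ IsPureSubmodule U ∧
      IsFaithfulSub U ∧ ¬ U.FG := by
  classical
  have mnp : ∀ g : R, maximalIdeal R ≠ Ideal.span {g} := fun g h =>
    hnoeth (noeth_of_principal_max hchain harch h)
  obtain ⟨b₀, hb₀m, hb₀0⟩ : ∃ z : R, z ∈ maximalIdeal R ∧ z ≠ 0 := by
    by_contra hc
    push_neg at hc
    apply mnp 0
    rw [Ideal.span_singleton_eq_bot.mpr rfl, eq_bot_iff]
    intro z hz
    rw [Submodule.mem_bot]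
    exact hc z hz
  have hhalf : ∀ p : {z : R // z ∈ maximalIdeal R ∧ z ≠ 0},
      ∃ q : {z : R // z ∈ maximalIdeal R ∧ z ≠ 0}, (q : R) ^ 2 ∣ (p : R) := by
    rintro ⟨z, hzm, hz0⟩
    obtain ⟨b', h1, h2, h3⟩ := half hchain mnp hzm hz0
    exact ⟨⟨b', h1, h2⟩, h3⟩
  choose G hG using hhalf
  let bs : ℕ → {z : R // z ∈ maximalIdeal R ∧ z ≠ 0} := fun k =>
    Nat.rec ⟨b₀, hb₀m, hb₀0⟩ (fun _ p => G p) k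
  let b : ℕ → R := fun k => (bs k).1
  have hbm : ∀ k, b k ∈ maximalIdeal R := fun k => (bs k).2.1
  have hb0 : ∀ k, b k ≠ 0 := fun k => (bs k).2.2
  have hb2 : ∀ k, (b (k + 1)) ^ 2 ∣ b k := fun k => hG (bs k)
  have hdesc : ∀ (n : ℕ) (cx : R), ¬IsUnit cx → (∀ k, n ≤ k → cx ∣ b k) → False :=
    fun n cx => desc hchain harch b hb0 hb2 n cx
  have hstep := fun (x : E) (hx : x ≠ 0) (k : ℕ) =>
    step_lemma hchain harch hcoh hIF2 hE hard x hx (b k) (hbm k) (hb0 k)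
  choose T Al Y p1 p2 p3 p4 p5 p6 p7 p8 using hstep
  obtain ⟨x₀, hx₀⟩ := exists_ne (0 : E)
  let X : ℕ → {z : E // z ≠ 0} := fun m =>
    Nat.rec ⟨x₀, hx₀⟩ (fun m p => ⟨Y p.1 p.2 m, p8 p.1 p.2 m⟩) m
  let x : ℕ → E := fun m => (X m).1
  let t : ℕ → R := fun m => T (x m) (X m).2 m
  let a : ℕ → R := fun m => Al (x m) (X m).2 m
  have hxne : ∀ m, x m ≠ 0 := fun m => (X m).2
  have htx : ∀ m, t m • x m = 0 := fun m => p1 (x m) (X m).2 m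
  have ht0 : ∀ m, t m ≠ 0 := fun m => p2 (x m) (X m).2 m
  have hH1 : ∀ m (u : R), u • x m = 0 → t m ∣ b m * u := fun m => p3 (x m) (X m).2 m
  have hat : ∀ m, a m * t m = 0 := fun m => p4 (x m) (X m).2 m
  have hgen : ∀ m (r : R), r * t m = 0 → a m ∣ r := fun m => p5 (x m) (X m).2 m
  have hau : ∀ m, ¬ IsUnit (a m) := fun m => p6 (x m) (X m).2 m
  have hax : ∀ m, a m • x (m + 1) = x m := fun m => p7 (x m) (X m).2 m
  let c : ℕ → ℕ → R := fun n m => ∏ i ∈ Finset.Ico n m, a i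
  have hcnn : ∀ n, c n n = 1 := fun n => by simp [c]
  have hcsucc : ∀ n m, n ≤ m → c n (m + 1) = c n m * a m := fun n m h => by
    simp only [c]
    rw [Finset.prod_Ico_succ_top h]
  have hcx : ∀ n m, n ≤ m → c n m • x m = x n := by
    intro n m h
    induction m, h using Nat.le_induction with
    | base => rw [hcnn, one_smul]
    | succ m hm ih =>
      rw [hcsucc n m hm, mul_smul, hax m, ih]
  have htrans : ∀ n m, n ≤ m → ∀ u : R, u • x n = 0 → (c n m * u) • x m = 0 := by
    intro n m h u hu
    rw [mul_comm, mul_smul, hcx n m h]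
    exact hu
  have hGEN : ∀ n m, n ≤ m → ∀ w : R, w • x n = 0 → b m * c n (m + 1) * w = 0 := by
    intro n m h w hw
    have h1 : (c n m * w) • x m = 0 := htrans n m h w hw
    obtain ⟨ρ, hρ⟩ := hH1 m (c n m * w) h1
    calc b m * c n (m + 1) * w = a m * (b m * (c n m * w)) := by
          rw [hcsucc n m h]; ring
      _ = a m * (t m * ρ) := by rw [hρ]
      _ = 0 := by rw [← mul_assoc, hat m, zero_mul]
  have hdiv : ∀ n (u : R), u • x n = 0 → ∃ m, n ≤ m ∧ u * c n m = 0 := by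
    intro n u hu
    by_contra hcon
    push_neg at hcon
    have hu0 : u ≠ 0 := by
      have h1 := hcon n le_rfl
      rwa [hcnn, mul_one] at h1
    have hnp := ann_not_principal hchain hcoh hIF2 hE hard (x n) (hxne n) u
    have hle : ¬ annOf R (x n) ≤ Ideal.span {u} := by
      intro hle2
      refine hnp (le_antisymm hle2 ?_)
      rw [Ideal.span_le]
      intro z hz
      rw [Set.mem_singleton_iff] at hz
      subst hz
      exact (mem_annOf _ _).mpr hu
    obtain ⟨w, hwA, hwu⟩ := SetLike.not_le_iff_exists.mp hle
    have hwx : w • x n = 0 := (mem_annOf _ _).mp hwA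
    obtain ⟨h, hh⟩ : w ∣ u := by
      rcases chain_dvd hchain u w with hd | hd
      · exact absurd (Ideal.mem_span_singleton.mpr hd) hwu
      · exact hd
    have hhu : ¬ IsUnit h := by
      intro hu2
      apply hwu
      obtain ⟨v, hv⟩ := hu2
      refine Ideal.mem_span_singleton.mpr ⟨((v⁻¹ : Rˣ) : R), ?_⟩
      rw [hh, ← hv, mul_assoc, Units.mul_inv, mul_one]
    refine hdesc n h hhu ?_
    intro k hk
    rcases chain_dvd hchain h (b k) with hd | hd
    · exact hd
    · obtain ⟨h'', hh''⟩ := hd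
      exfalso
      apply hcon (k + 1) (by omega)
      have hz := hGEN n k hk w hwx
      calc u * c n (k + 1) = h'' * (b k * c n (k + 1) * w) := by rw [hh, hh'']; ring
        _ = 0 := by rw [hz, mul_zero]
  have hfaith : ∀ r : R, (∀ m, r • x m = 0) → r = 0 := by
    intro r hr
    by_contra hr0
    have hbr : ∀ m, b m * r = 0 := by
      intro m
      obtain ⟨i, hi⟩ : a m ∣ r := by
        rcases chain_dvd hchain (a m) r with hd | hd
        · exact hd
        · obtain ⟨ρ, hρ⟩ := hd
          exfalso
          apply hxne m
          rw [← hax m, hρ, mul_comm, mul_smul, hr (m + 1), smul_zero]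
      have hix : i • x m = 0 := by
        rw [← hax m, smul_smul, mul_comm, ← hi]
        exact hr (m + 1)
      obtain ⟨ρ, hρ⟩ := hH1 m i hix
      calc b m * r = a m * (b m * i) := by rw [hi]; ring
        _ = 0 := by rw [hρ, ← mul_assoc, hat m, zero_mul]
    obtain ⟨q, hq⟩ := ann_principal hcoh hchain r
    have hqu : ¬ IsUnit q := by
      intro hu2
      apply hr0
      have h1 : (1 : R) ∈ annOf R r := by
        rw [hq, Ideal.span_singleton_eq_top.mpr hu2]
        trivial
      rwa [mem_annOf, one_smul] at h1
    refine hdesc 0 q hqu ?_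
    intro k _
    exact Ideal.mem_span_singleton.mp
      (hq ▸ (mem_annOf r (b k)).mpr (by rw [smul_eq_mul]; exact hbr k))
  set U : Submodule R E := ⨆ m, Submodule.span R {x m} with hUdef
  have hmono : Monotone (fun m => Submodule.span R ({x m} : Set E)) := by
    apply monotone_nat_of_le_succ
    intro m
    rw [Submodule.span_le]
    intro z hz
    rw [Set.mem_singleton_iff] at hz
    subst hz
    exact Submodule.mem_span_singleton.mpr ⟨a m, hax m⟩
  have hmemU : ∀ z : E, z ∈ U ↔ ∃ (m : ℕ) (r : R), r • x m = z := by
    intro z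
    rw [hUdef, Submodule.mem_iSup_of_directed _ hmono.directed_le]
    constructor
    · rintro ⟨m, hm⟩
      obtain ⟨r, hr⟩ := Submodule.mem_span_singleton.mp hm
      exact ⟨m, r, hr⟩
    · rintro ⟨m, r, hr⟩
      exact ⟨m, Submodule.mem_span_singleton.mpr ⟨r, hr⟩⟩
  have hxU : ∀ m, x m ∈ U := fun m => (hmemU _).mpr ⟨m, 1, one_smul _ _⟩
  refine ⟨U, ?_, ?_, ?_, ?_, ?_⟩
  · intro hb
    apply hxne 0
    have h1 := hxU 0
    rwa [hb, Submodule.mem_bot] at h1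
  · have hcomp : ∀ z w : E, z ∈ U → w ∈ U →
        (∃ ρ : R, z = ρ • w) ∨ (∃ ρ : R, w = ρ • z) := by
      intro z w hz hw
      obtain ⟨i, r, hr⟩ := (hmemU z).mp hz
      obtain ⟨j, s, hs⟩ := (hmemU w).mp hw
      have hik : i ≤ max i j := le_max_left _ _
      have hjk : j ≤ max i j := le_max_right _ _
      have hz' : (r * c i (max i j)) • x (max i j) = z := by
        rw [mul_smul, hcx i _ hik, hr]
      have hw' : (s * c j (max i j)) • x (max i j) = w := by
        rw [mul_smul, hcx j _ hjk, hs]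
      rcases chain_dvd hchain (r * c i (max i j)) (s * c j (max i j)) with ⟨ρ, hρ⟩ | ⟨ρ, hρ⟩
      · right
        refine ⟨ρ, ?_⟩
        rw [← hw', hρ, mul_comm, mul_smul, hz']
      · left
        refine ⟨ρ, ?_⟩
        rw [← hz', hρ, mul_comm, mul_smul, hw']
    intro V W hV hW
    by_cases hVW : V ≤ W
    · exact Or.inl hVW
    · right
      obtain ⟨v, hvV, hvW⟩ := SetLike.not_le_iff_exists.mp hVW
      intro w hwW
      rcases hcomp v w (hV hvV) (hW hwW) with ⟨ρ, hρ⟩ | ⟨ρ, hρ⟩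
      · exact absurd (by rw [hρ]; exact Submodule.smul_mem W ρ hwW) hvW
      · rw [hρ]
        exact Submodule.smul_mem V ρ hvV
  · intro I hIfg
    obtain ⟨aa, rfl⟩ := fg_principal hchain I hIfg
    rw [Submodule.ideal_span_singleton_smul, Submodule.ideal_span_singleton_smul]
    apply le_antisymm
    · intro z hz
      obtain ⟨hz1, hz2⟩ := Submodule.mem_inf.mp hz
      obtain ⟨e, -, he⟩ := (mem_ptsmul _ _ _).mp hz1
      rcases eq_or_ne aa 0 with rfl | haa
      · have hz0 : z = 0 := by rw [← he, zero_smul]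
        rw [hz0]
        exact Submodule.zero_mem _
      obtain ⟨n, s, hsn⟩ := (hmemU z).mp hz2
      obtain ⟨q, hq⟩ := ann_principal hcoh hchain aa
      have hqa : q * aa = 0 := by
        have h1 : q ∈ annOf R aa := hq ▸ Ideal.subset_span rfl
        rwa [mem_annOf, smul_eq_mul] at h1
      have hqz : (q * s) • x n = 0 := by
        rw [mul_smul, hsn, ← he, smul_smul, hqa, zero_smul]
      obtain ⟨m, hnm, hm0⟩ := hdiv n (q * s) hqz
      have hsc : s * c n m ∈ Ideal.span {aa} := by
        apply mem_span_of_ann hIF2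
        intro r hr
        obtain ⟨ρ, hρ⟩ : q ∣ r :=
          Ideal.mem_span_singleton.mp (hq ▸ (mem_annOf aa r).mpr (by rwa [smul_eq_mul]))
        rw [hρ]
        calc q * ρ * (s * c n m) = ρ * (q * s * c n m) := by ring
          _ = 0 := by rw [hm0, mul_zero]
      obtain ⟨r', hr'⟩ := Ideal.mem_span_singleton.mp hsc
      refine (mem_ptsmul _ _ _).mpr ⟨r' • x m, ?_, ?_⟩
      · exact (hmemU _).mpr ⟨m, r', rfl⟩
      · rw [smul_smul, ← hr', mul_smul, hcx n m hnm, hsn]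
    · apply le_inf
      · intro z hz
        obtain ⟨uelt, hu, he⟩ := (mem_ptsmul _ _ _).mp hz
        exact (mem_ptsmul _ _ _).mpr ⟨uelt, trivial, he⟩
      · intro z hz
        obtain ⟨uelt, hu, he⟩ := (mem_ptsmul _ _ _).mp hz
        rw [← he]
        exact Submodule.smul_mem _ _ hu
  · intro r hrU
    apply hfaith r
    intro m
    exact hrU (x m) (hxU m)
  · rintro ⟨S, hS⟩
    have hg : ∀ g : E, g ∈ S → ∃ m : ℕ, g ∈ Submodule.span R ({x m} : Set E) := by
      intro g hgS
      have h1 : g ∈ U := by rw [← hS]; exact Submodule.subset_span hgS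
      obtain ⟨m, r, hr⟩ := (hmemU g).mp h1
      exact ⟨m, Submodule.mem_span_singleton.mpr ⟨r, hr⟩⟩
    choose f hf using hg
    set N := S.attach.sup (fun g => f g.1 g.2) with hN
    have hsub : U ≤ Submodule.span R ({x N} : Set E) := by
      rw [← hS, Submodule.span_le]
      intro g hgS
      rw [Finset.mem_coe] at hgS
      have h2 : f g hgS ≤ N :=
        Finset.le_sup (f := fun g : {z // z ∈ S} => f g.1 g.2) (Finset.mem_attach S ⟨g, hgS⟩)
      exact hmono h2 (hf g hgS)
    obtain ⟨r, hr⟩ := Submodule.mem_span_singleton.mp (hsub (hxU (N + 1)))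
    have h3 : (1 - r * a N) • x (N + 1) = 0 := by
      rw [sub_smul, one_smul, mul_smul, hax N, hr, sub_self]
    have hunit : IsUnit (1 - r * a N) := by
      apply one_sub_unit
      exact Ideal.mul_mem_left _ _ ((mem_maximalIdeal _).mpr (mem_nonunits_iff.mpr (hau N)))
    exact hxne (N + 1) (unit_smul_eq_zero hunit h3)

theorem easycase (hchain : IsChainRing R) (hcoh : IsCoherentRing R)
    (hIF2 : IsFpInjective R R) (y : E) (hy : annOf R y = ⊥) :
    (Submodule.span R {y} : Submodule R E) ≠ ⊥ ∧
    IsUniserialSub (Submodule.span R {y} : Submodule R E) ∧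
    IsPureSubmodule (Submodule.span R {y} : Submodule R E) ∧
    IsFaithfulSub (Submodule.span R {y} : Submodule R E) := by
  have hyann : ∀ r : R, r • y = 0 → r = 0 := by
    intro r hr
    have h1 : r ∈ annOf R y := (mem_annOf y r).mpr hr
    rwa [hy, Submodule.mem_bot] at h1
  have hy0 : y ≠ 0 := by
    intro h
    exact one_ne_zero (hyann 1 (by rw [h, smul_zero]))
  refine ⟨?_, ?_, ?_, ?_⟩
  · intro hb
    apply hy0
    have h1 : y ∈ Submodule.span R ({y} : Set E) := Submodule.subset_span rfl
    rwa [hb, Submodule.mem_bot] at h1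
  · have hcomp : ∀ z w : E, z ∈ Submodule.span R ({y} : Set E) →
        w ∈ Submodule.span R ({y} : Set E) →
        (∃ ρ : R, z = ρ • w) ∨ (∃ ρ : R, w = ρ • z) := by
      intro z w hz hw
      obtain ⟨r, hr⟩ := Submodule.mem_span_singleton.mp hz
      obtain ⟨s, hs⟩ := Submodule.mem_span_singleton.mp hw
      rcases chain_dvd hchain r s with ⟨ρ, hρ⟩ | ⟨ρ, hρ⟩
      · right
        exact ⟨ρ, by rw [← hs, hρ, mul_comm, mul_smul, hr]⟩
      · left
        exact ⟨ρ, by rw [← hr, hρ, mul_comm, mul_smul, hs]⟩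
    intro V W hV hW
    by_cases hVW : V ≤ W
    · exact Or.inl hVW
    · right
      obtain ⟨v, hvV, hvW⟩ := SetLike.not_le_iff_exists.mp hVW
      intro w hwW
      rcases hcomp v w (hV hvV) (hW hwW) with ⟨ρ, hρ⟩ | ⟨ρ, hρ⟩
      · exact absurd (by rw [hρ]; exact Submodule.smul_mem W ρ hwW) hvW
      · rw [hρ]
        exact Submodule.smul_mem V ρ hvV
  · intro I hIfg
    obtain ⟨aa, rfl⟩ := fg_principal hchain I hIfg
    rw [Submodule.ideal_span_singleton_smul, Submodule.ideal_span_singleton_smul]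
    apply le_antisymm
    · intro z hz
      obtain ⟨hz1, hz2⟩ := Submodule.mem_inf.mp hz
      obtain ⟨e, -, he⟩ := (mem_ptsmul _ _ _).mp hz1
      rcases eq_or_ne aa 0 with rfl | haa
      · have hz0 : z = 0 := by rw [← he, zero_smul]
        rw [hz0]
        exact Submodule.zero_mem _
      obtain ⟨s, hs⟩ := Submodule.mem_span_singleton.mp hz2
      obtain ⟨q, hq⟩ := ann_principal hcoh hchain aa
      have hqa : q * aa = 0 := by
        have h1 : q ∈ annOf R aa := hq ▸ Ideal.subset_span rfl
        rwa [mem_annOf, smul_eq_mul] at h1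
      have hqs : q * s = 0 := by
        apply hyann
        rw [mul_smul, hs, ← he, smul_smul, hqa, zero_smul]
      have hsc : s ∈ Ideal.span {aa} := by
        apply mem_span_of_ann hIF2
        intro r hr
        obtain ⟨ρ, hρ⟩ : q ∣ r :=
          Ideal.mem_span_singleton.mp (hq ▸ (mem_annOf aa r).mpr (by rwa [smul_eq_mul]))
        rw [hρ]
        calc q * ρ * s = ρ * (q * s) := by ring
          _ = 0 := by rw [hqs, mul_zero]
      obtain ⟨r', hr'⟩ := Ideal.mem_span_singleton.mp hsc
      refine (mem_ptsmul _ _ _).mpr ⟨r' • y, ?_, ?_⟩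
      · exact Submodule.mem_span_singleton.mpr ⟨r', rfl⟩
      · rw [smul_smul, ← hr', hs]
    · apply le_inf
      · intro z hz
        obtain ⟨uelt, hu, he⟩ := (mem_ptsmul _ _ _).mp hz
        exact (mem_ptsmul _ _ _).mpr ⟨uelt, trivial, he⟩
      · intro z hz
        obtain ⟨uelt, hu, he⟩ := (mem_ptsmul _ _ _).mp hz
        rw [← he]
        exact Submodule.smul_mem _ _ hu
  · intro r hr
    exact hyann r (hr y (Submodule.subset_span rfl))

end ModSide

end Stmt6Aux

end Stmt6AuxSection

theorem stmt6 (R : Type u) [CommRing R] [IsLocalRing R]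
    (hchain : IsChainRing R) (harch : IsArchimedeanLocal R)
    (hnoeth : ¬ IsNoetherianRing R) (hIF : IsIFRing R)
    (E : Type u) [AddCommGroup E] [Module R E] [Nontrivial E]
    (hE : IsFpInjective R E) :
    (∃ U : Submodule R E, U ≠ ⊥ ∧ IsUniserialSub U ∧ IsPureSubmodule U ∧
        IsFaithfulSub U) ∧
    (∀ y : E, annOf R y = ⊥ →
      ((Submodule.span R {y} : Submodule R E) ≠ ⊥ ∧
        IsUniserialSub (Submodule.span R {y} : Submodule R E) ∧
        IsPureSubmodule (Submodule.span R {y} : Submodule R E) ∧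
        IsFaithfulSub (Submodule.span R {y} : Submodule R E))) ∧
    ((∀ y : E, annOf R y ≠ ⊥) →
      ∃ U : Submodule R E, U ≠ ⊥ ∧ IsUniserialSub U ∧ IsPureSubmodule U ∧
        IsFaithfulSub U ∧ ¬ U.FG) := by
  obtain ⟨hcoh, hIF2⟩ := hIF
  refine ⟨?_, ?_, ?_⟩
  · by_cases hhard : ∀ y : E, annOf R y ≠ ⊥
    · obtain ⟨U, h1, h2, h3, h4, _⟩ :=
        Stmt6Aux.hardcase hchain harch hnoeth hcoh hIF2 hE hhard
      exact ⟨U, h1, h2, h3, h4⟩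
    · push_neg at hhard
      obtain ⟨y, hy⟩ := hhard
      obtain ⟨h1, h2, h3, h4⟩ := Stmt6Aux.easycase hchain hcoh hIF2 y hy
      exact ⟨_, h1, h2, h3, h4⟩
  · intro y hy
    exact Stmt6Aux.easycase hchain hcoh hIF2 y hy
  · intro hhard
    exact Stmt6Aux.hardcase hchain harch hnoeth hcoh hIF2 hE hhard
end

section
/- Let R be a valuation ring and I a nonzero proper ideal of R. Then I^♯ = {r in R : rI ⊂ I} (strict inclusion) is a prime ideal of R. -/
open IsLocalRing

universe u

theorem stmt9 (R : Type u) [CommRing R] [IsLocalRing R] (hchain : IsChainRing R)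
    (I : Ideal R) (hI0 : I ≠ ⊥) (hI1 : I ≠ ⊤) :
    ∃ J : Ideal R, (↑J : Set R) = {r : R | Ideal.span {r} * I < I} ∧ J.IsPrime := by
  have hle : ∀ r : R, Ideal.span {r} * I ≤ I := fun r => Ideal.mul_le_right
  have key : ∀ r : R, (Ideal.span {r} * I < I ↔ Ideal.span {r} * I ≠ I) := fun r =>
    (hle r).lt_iff_ne
  refine ⟨⟨⟨⟨{r : R | Ideal.span {r} * I < I}, ?_⟩, ?_⟩, ?_⟩, rfl, ?_, ?_⟩
  · -- add_mem'
    intro a b ha hb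
    simp only [Set.mem_setOf_eq] at *
    have h1 : Ideal.span {a + b} ≤ Ideal.span {a} ⊔ Ideal.span {b} := by
      rw [Ideal.span_le]
      intro x hx
      simp only [Set.mem_singleton_iff] at hx
      subst hx
      exact add_mem (Ideal.mem_sup_left (Ideal.subset_span rfl))
        (Ideal.mem_sup_right (Ideal.subset_span rfl))
    have h2 : Ideal.span {a + b} * I ≤ Ideal.span {a} * I ⊔ Ideal.span {b} * I := by
      rw [← Ideal.sup_mul]
      exact Ideal.mul_mono_left h1
    rcases hchain (Ideal.span {a} * I) (Ideal.span {b} * I) with h | h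
    · exact lt_of_le_of_lt (h2.trans (sup_le h le_rfl)) hb
    · exact lt_of_le_of_lt (h2.trans (sup_le le_rfl h)) ha
  · -- zero_mem'
    have : Ideal.span ({0} : Set R) * I = ⊥ := by
      rw [Ideal.span_singleton_eq_bot.mpr rfl, Ideal.bot_mul]
    simp only [Set.mem_setOf_eq, this]
    exact Ne.bot_lt hI0
  · -- smul_mem'
    intro c a ha
    simp only [Set.mem_setOf_eq, smul_eq_mul] at *
    have h1 : Ideal.span {c * a} ≤ Ideal.span {a} := by
      rw [Ideal.span_singleton_le_iff_mem, Ideal.mem_span_singleton]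
      exact ⟨c, mul_comm c a⟩
    exact lt_of_le_of_lt (Ideal.mul_mono_left h1) ha
  · -- ne_top
    intro h
    have h1 : (1 : R) ∈ ({r : R | Ideal.span {r} * I < I} : Set R) :=
      (Ideal.eq_top_iff_one _).mp h
    simp only [Set.mem_setOf_eq, Ideal.span_singleton_one, Ideal.top_mul] at h1
    exact lt_irrefl _ h1
  · -- mem_or_mem
    intro x y hxy
    by_contra hcon
    push_neg at hcon
    obtain ⟨hx, hy⟩ := hcon
    have hx' : Ideal.span {x} * I = I := by
      by_contra h; exact hx ((key x).mpr h)
    have hy' : Ideal.span {y} * I = I := by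
      by_contra h; exact hy ((key y).mpr h)
    have : Ideal.span {x * y} * I = I := by
      rw [← Ideal.span_singleton_mul_span_singleton, mul_assoc, hy', hx']
    exact (key (x * y)).mp hxy this
end
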